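/- arXiv:1506.00279 — 4 statements merged into one kernel-verified Lean document; each statement's English description precedes it below -/
import Mathlib

section
/- For every entire function f on ℂ, sup_{z∈ℂ} |f(z)| e^{-(α/2)|z|²} is comparable (with constants depending only on α) to |f(0)| + sup_{z∈ℂ} (|f'(z)|/(1+|z|)) e^{-(α/2)|z|²}. -/
open MeasureTheory Complex Filter Topology ENNReal NNReal Metric



/-- pointwise integrand bound -/
lemma fock_pointwise_bound (α : ℝ) (hα : 0 < α) {t r : ℝ} (ht0 : 0 ≤ t) (ht1 : t ≤ 1)
    (hr : 0 ≤ r) :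
    r * ((1 + t*r) * Real.exp (α/2 * (t^2*r^2))) ≤
      (2*Real.exp (α/2) + (r + r^2) * Real.exp (α/8 * r^2)) +
        3*t*r^2*Real.exp (α/2*(t^2*r^2)) := by
  have hE := Real.exp_pos (α/2*(t^2*r^2))
  have hE8 := Real.exp_pos (α/8*r^2)
  have hEa := Real.exp_pos (α/2)
  have h5 : 0 ≤ (r+r^2)*Real.exp (α/8*r^2) := by positivity
  have h6 : 0 ≤ 3*t*r^2*Real.exp (α/2*(t^2*r^2)) := by positivity
  rcases le_or_gt r 1 with hr1 | hr1
  · have htr : 0 ≤ t*r := mul_nonneg ht0 hr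
    have htr1 : t*r ≤ 1 := by nlinarith
    have hsq : t^2*r^2 ≤ 1 := by nlinarith
    have h1 : Real.exp (α/2*(t^2*r^2)) ≤ Real.exp (α/2) := Real.exp_le_exp.2 (by nlinarith)
    have h2 : r * (1+t*r) ≤ 2 := by nlinarith
    have h2' : 0 ≤ 1 + t*r := by nlinarith
    have h3 : r * ((1+t*r) * Real.exp (α/2*(t^2*r^2))) ≤ 2*Real.exp (α/2*(t^2*r^2)) := by
      calc r * ((1+t*r) * Real.exp (α/2*(t^2*r^2)))
          = (r * (1+t*r)) * Real.exp (α/2*(t^2*r^2)) := by ring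
        _ ≤ 2*Real.exp (α/2*(t^2*r^2)) := mul_le_mul_of_nonneg_right h2 hE.le
    nlinarith
  · rcases le_or_gt t (1/2) with ht2 | ht2
    · have ht4 : t^2 ≤ 1/4 := by nlinarith
      have hsq : t^2*r^2 ≤ r^2/4 := by nlinarith [sq_nonneg r]
      have h1 : Real.exp (α/2*(t^2*r^2)) ≤ Real.exp (α/8*r^2) := Real.exp_le_exp.2 (by nlinarith)
      have h2 : r * (1+t*r) ≤ r + r^2 := by nlinarith
      have h3 : r * ((1+t*r) * Real.exp (α/2*(t^2*r^2))) ≤ (r+r^2)*Real.exp (α/2*(t^2*r^2)) := by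
        calc r * ((1+t*r) * Real.exp (α/2*(t^2*r^2)))
            = (r * (1+t*r)) * Real.exp (α/2*(t^2*r^2)) := by ring
          _ ≤ (r+r^2)*Real.exp (α/2*(t^2*r^2)) := mul_le_mul_of_nonneg_right h2 hE.le
      have h4 : (r+r^2)*Real.exp (α/2*(t^2*r^2)) ≤ (r+r^2)*Real.exp (α/8*r^2) :=
        mul_le_mul_of_nonneg_left h1 (by positivity)
      linarith
    · have hr2 : r ≤ r^2 := by nlinarith
      have hr3 : r^2 ≤ 2*t*r^2 := by nlinarith [sq_nonneg r]
      have h2 : r * (1+t*r) ≤ 3*t*r^2 := by nlinarith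
      have h3 : r * ((1+t*r) * Real.exp (α/2*(t^2*r^2))) ≤ 3*t*r^2*Real.exp (α/2*(t^2*r^2)) := by
        calc r * ((1+t*r) * Real.exp (α/2*(t^2*r^2)))
            = (r * (1+t*r)) * Real.exp (α/2*(t^2*r^2)) := by ring
          _ ≤ 3*t*r^2*Real.exp (α/2*(t^2*r^2)) := mul_le_mul_of_nonneg_right h2 hE.le
      linarith

/-- middle term bound -/
lemma fock_mid_bound (α : ℝ) (hα : 0 < α) {r : ℝ} (hr : 0 ≤ r) :
    (r + r^2) * Real.exp (α/8 * r^2) ≤ (1 + 16/(3*α)) * Real.exp (α/2 * r^2) := by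
  have hsplit : Real.exp (α/2*r^2) = Real.exp (α/8*r^2) * Real.exp (3*α/8*r^2) := by
    rw [← Real.exp_add]; congr 1; ring
  have hx : 3*α/8*r^2 ≤ Real.exp (3*α/8*r^2) := by
    nlinarith [Real.add_one_le_exp (3*α/8*r^2)]
  have h1 : 1 ≤ Real.exp (3*α/8*r^2) := Real.one_le_exp (by positivity)
  have hk : (16/(3*α)) * (3*α/8*r^2) = 2*r^2 := by field_simp; ring
  have h2 : r + r^2 ≤ (1 + 16/(3*α)) * Real.exp (3*α/8*r^2) := by
    have h3 : (16/(3*α)) * (3*α/8*r^2) ≤ (16/(3*α)) * Real.exp (3*α/8*r^2) :=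
      mul_le_mul_of_nonneg_left hx (by positivity)
    nlinarith [sq_nonneg (r-1)]
  calc (r+r^2)*Real.exp (α/8*r^2)
      ≤ ((1+16/(3*α))*Real.exp (3*α/8*r^2)) * Real.exp (α/8*r^2) :=
        mul_le_mul_of_nonneg_right h2 (Real.exp_pos _).le
    _ = (1+16/(3*α)) * Real.exp (α/2*r^2) := by rw [hsplit]; ring



lemma fock_cauchy_est (α : ℝ) (hα : 0 < α) {f : ℂ → ℂ} (hf : Differentiable ℂ f) {M : ℝ}
    (hM : ∀ w, ‖f w‖ ≤ M * Real.exp (α/2 * ‖w‖ ^ 2)) (z : ℂ) :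
    ‖deriv f z - ↑α * (starRingEnd ℂ) z * f z‖
      ≤ M * Real.exp (α/2) * Real.exp (α/2 * ‖z‖ ^ 2) := by
  have hM0 : 0 ≤ M := by
    have h0 := hM 0
    nlinarith [Real.exp_pos (α/2 * ‖(0:ℂ)‖ ^ 2), norm_nonneg (f 0)]
  set c : ℂ := -(↑α * (starRingEnd ℂ) z) with hc
  set g : ℂ → ℂ := fun w => f w * Complex.exp (c * (w - z)) with hg
  have hgdiff : Differentiable ℂ g := hf.mul ((differentiable_id.sub_const z).const_mul c).cexp
  have hder : HasDerivAt g (deriv f z + f z * c) z := by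
    have h0 : HasDerivAt (fun w : ℂ => c * (w - z)) c z := by
      simpa using ((hasDerivAt_id z).sub_const z).const_mul c
    have h1 : HasDerivAt (fun w => Complex.exp (c * (w - z))) c z := by
      simpa using h0.cexp
    have h2 := (hf.differentiableAt.hasDerivAt).mul h1
    exact h2.congr_deriv (by simp)
  have hval : deriv f z - ↑α * (starRingEnd ℂ) z * f z = deriv g z := by
    rw [hder.deriv, hc]; ring
  rw [hval]
  have key := Complex.norm_deriv_le_of_forall_mem_sphere_norm_le (c := z) (R := 1) one_pos
    (hgdiff.diffContOnCl) (C := M * Real.exp (α/2) * Real.exp (α/2 * ‖z‖ ^ 2)) ?_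
  · simpa using key
  · intro w hw
    have hw1 : ‖w - z‖ = 1 := by
      rw [mem_sphere_iff_norm] at hw; rw [hw]
    have hre : (c * (w - z)).re + α/2 * ‖w‖ ^ 2
        = α/2 * ‖z‖ ^ 2 + α/2 * ‖w-z‖ ^ 2 := by
      simp only [hc, Complex.sq_norm, Complex.normSq_apply, Complex.mul_re, Complex.neg_re,
        Complex.neg_im, Complex.sub_re, Complex.sub_im, Complex.mul_im, Complex.conj_re,
        Complex.conj_im, Complex.ofReal_re, Complex.ofReal_im]
      ring
    calc ‖g w‖ = ‖f w‖ * Real.exp ((c * (w - z)).re) := by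
          rw [hg]; simp [Complex.norm_exp]
      _ ≤ (M * Real.exp (α/2 * ‖w‖ ^ 2)) * Real.exp ((c * (w - z)).re) :=
          mul_le_mul_of_nonneg_right (hM w) (Real.exp_pos _).le
      _ = M * Real.exp (α/2 * ‖w‖ ^ 2 + (c * (w - z)).re) := by
          rw [Real.exp_add]; ring
      _ = M * Real.exp (α/2) * Real.exp (α/2 * ‖z‖ ^ 2) := by
          rw [show α/2 * ‖w‖ ^ 2 + (c * (w - z)).re
              = α/2 * ‖z‖ ^ 2 + α/2 * ‖w-z‖ ^ 2 by linarith [hre]]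
          rw [hw1, Real.exp_add]; ring




lemma fock_ftc_bound (α : ℝ) (hα : 0 < α) {f : ℂ → ℂ} (hf : Differentiable ℂ f) {B : ℝ}
    (hB : 0 ≤ B)
    (h : ∀ w, ‖deriv f w‖
        ≤ B * ((1 + ‖w‖) * Real.exp (α/2 * ‖w‖ ^ 2))) (z : ℂ) :
    ‖f z‖ ≤
      (‖f 0‖ + B * (2*Real.exp (α/2) + (1 + 16/(3*α)) + 3/α))
        * Real.exp (α/2 * ‖z‖ ^ 2) := by
  set r := ‖z‖ with hrdef
  have hr0 : 0 ≤ r := norm_nonneg z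
  -- continuity of deriv f
  have hdc : Continuous (deriv f) := by
    have h := (analyticOnNhd_univ_iff_differentiable.mpr hf).deriv
    exact continuous_iff_continuousAt.mpr fun x => (h x trivial).continuousAt
  -- FTC
  have hder : ∀ t : ℝ, HasDerivAt (fun s : ℝ => f (↑s * z)) (deriv f (↑t * z) * z) t := by
    intro t
    have h1 : HasDerivAt (fun w : ℂ => w * z) z ↑t := hasDerivAt_mul_const z
    have h2 : HasDerivAt f (deriv f (↑t * z)) (↑t * z) := (hf _).hasDerivAt
    exact (h2.comp (↑t : ℂ) h1).comp_ofReal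
  have hcont' : Continuous (fun t : ℝ => deriv f (↑t * z) * z) :=
    (hdc.comp (Complex.continuous_ofReal.mul continuous_const)).mul continuous_const
  have hftc : ∫ t in (0:ℝ)..1, deriv f (↑t*z)*z = f z - f 0 := by
    have := intervalIntegral.integral_eq_sub_of_hasDerivAt (f := fun s : ℝ => f (↑s*z))
      (f' := fun t => deriv f (↑t * z) * z) (fun t _ => hder t)
      (hcont'.intervalIntegrable 0 1)
    simpa using this
  -- the dominating function
  set c₀ : ℝ := 2*Real.exp (α/2) + (r + r^2) * Real.exp (α/8 * r^2) with hc₀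
  set φ : ℝ → ℝ := fun t => B * c₀ + B * (3*t*r^2*Real.exp (α/2*(t^2*r^2))) with hφ
  have hφcont : Continuous φ := by fun_prop
  have hnorm : ‖f z - f 0‖ ≤ |∫ t in (0:ℝ)..1, φ t| := by
    rw [← hftc]
    refine (intervalIntegral.norm_integral_le_of_norm_le (μ := volume) zero_le_one ?_ (hφcont.intervalIntegrable 0 1)).trans (le_abs_self _)
    filter_upwards with t ht
    obtain ⟨ht0, ht1⟩ := ht
    have htabs : ‖↑t * z‖ = t * r := by
      rw [norm_mul, Complex.norm_real, Real.norm_eq_abs, abs_of_pos ht0]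
    have hb := h (↑t * z)
    rw [htabs] at hb
    have hb2 : ‖deriv f (↑t*z) * z‖ ≤ (B * ((1 + t*r) * Real.exp (α/2 * (t*r) ^ 2))) * r := by
      rw [norm_mul, ← hrdef]
      exact mul_le_mul_of_nonneg_right hb hr0
    refine hb2.trans ?_
    have hpw := fock_pointwise_bound α hα ht0.le ht1 hr0
    have : (B * ((1 + t*r) * Real.exp (α/2 * (t*r) ^ 2))) * r
        = B * (r * ((1 + t*r) * Real.exp (α/2 * (t^2*r^2)))) := by rw [mul_pow]; ring
    rw [this, hφ, hc₀]
    calc B * (r * ((1 + t*r) * Real.exp (α/2 * (t^2*r^2))))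
        ≤ B * ((2*Real.exp (α/2) + (r + r^2) * Real.exp (α/8 * r^2))
            + 3*t*r^2*Real.exp (α/2*(t^2*r^2))) := mul_le_mul_of_nonneg_left hpw hB
      _ = B * (2*Real.exp (α/2) + (r + r^2) * Real.exp (α/8 * r^2))
            + B * (3*t*r^2*Real.exp (α/2*(t^2*r^2))) := by ring
  -- compute the integral
  have hG : ∀ t : ℝ, HasDerivAt (fun s : ℝ => 3/α * Real.exp (α/2 * (s^2*r^2)))
      (3*t*r^2 * Real.exp (α/2 * (t^2*r^2))) t := by
    intro t
    have h1 : HasDerivAt (fun s : ℝ => α/2 * (s^2*r^2)) (α*t*r^2) t := by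
      have h0 : HasDerivAt (fun s : ℝ => s^2) (2*t) t := by
        simpa using hasDerivAt_pow 2 t
      have := h0.const_mul (α/2*r^2)
      have e1 : (fun s : ℝ => α/2 * (s^2*r^2)) = (fun y => α / 2 * r ^ 2 * y ^ 2) := by
        funext s; ring
      rw [e1, show α*t*r^2 = α / 2 * r ^ 2 * (2 * t) by ring]
      exact this
    have h2 := (h1.exp).const_mul (3/α)
    refine h2.congr_deriv ?_
    have hα0 : α ≠ 0 := hα.ne'
    field_simp
  have hGcont : Continuous (fun t : ℝ => 3*t*r^2 * Real.exp (α/2 * (t^2*r^2))) := by fun_prop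
  have hGint : ∫ t in (0:ℝ)..1, 3*t*r^2*Real.exp (α/2*(t^2*r^2))
      = 3/α * Real.exp (α/2*r^2) - 3/α := by
    have := intervalIntegral.integral_eq_sub_of_hasDerivAt
      (f := fun s : ℝ => 3/α * Real.exp (α/2 * (s^2*r^2)))
      (f' := fun t => 3*t*r^2 * Real.exp (α/2 * (t^2*r^2))) (fun t _ => hG t)
      (hGcont.intervalIntegrable 0 1)
    rw [this]; norm_num
  have hφint : ∫ t in (0:ℝ)..1, φ t = B * c₀ + B * (3/α * Real.exp (α/2*r^2) - 3/α) := by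
    rw [hφ, intervalIntegral.integral_add (intervalIntegrable_const)
      (((show Continuous (fun t : ℝ => B * (3*t*r^2*Real.exp (α/2*(t^2*r^2)))) from
        continuous_const.mul hGcont).intervalIntegrable 0 1)),
      intervalIntegral.integral_const, intervalIntegral.integral_const_mul, hGint]
    simp
  -- final chain
  have htri : ‖f z‖ ≤ ‖f 0‖ + ‖f z - f 0‖ := by
    calc ‖f z‖ = ‖f 0 + (f z - f 0)‖ := by ring_nf
      _ ≤ ‖f 0‖ + ‖f z - f 0‖ := norm_add_le _ _
  have hE1 : (1:ℝ) ≤ Real.exp (α/2*r^2) := Real.one_le_exp (by positivity)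
  have hmid := fock_mid_bound α hα hr0
  have hf0 : 0 ≤ ‖f 0‖ := norm_nonneg _
  have hEa := Real.exp_pos (α/2)
  have hstep : ‖f z‖ ≤ ‖f 0‖
      + B * (2*Real.exp (α/2) + (r + r^2) * Real.exp (α/8 * r^2))
      + B * (3/α * Real.exp (α/2*r^2) - 3/α) := by
    have hnn : 0 ≤ B * c₀ + B * (3/α * Real.exp (α/2*r^2) - 3/α) := by
      have : 0 ≤ c₀ := by rw [hc₀]; positivity
      have h30 : 0 ≤ 3/α * Real.exp (α/2*r^2) - 3/α := by
        have : 3/α * 1 ≤ 3/α * Real.exp (α/2*r^2) :=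
          mul_le_mul_of_nonneg_left hE1 (by positivity)
        linarith
      positivity
    have habs : |∫ t in (0:ℝ)..1, φ t| = B * c₀ + B * (3/α * Real.exp (α/2*r^2) - 3/α) := by
      rw [hφint, _root_.abs_of_nonneg hnn]
    rw [← hc₀]
    linarith [hnorm.trans_eq habs]
  have h1 : ‖f 0‖ ≤ ‖f 0‖ * Real.exp (α/2*r^2) := by nlinarith
  have h2 : B * (2*Real.exp (α/2)) ≤ B * (2*Real.exp (α/2)) * Real.exp (α/2*r^2) := by
    nlinarith [mul_nonneg hB (by positivity : (0:ℝ) ≤ 2*Real.exp (α/2))]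
  have h3 : B * ((r + r^2) * Real.exp (α/8 * r^2))
      ≤ B * ((1 + 16/(3*α)) * Real.exp (α/2 * r^2)) := mul_le_mul_of_nonneg_left hmid hB
  have h4 : B * (3/α * Real.exp (α/2*r^2) - 3/α) ≤ B * (3/α * Real.exp (α/2*r^2)) := by
    have : 0 ≤ B * (3/α) := by positivity
    nlinarith
  nlinarith [h1, h2, h3, h4, hstep]

/-- for entire `f`, `sup_z |f(z)|e^{-(α/2)|z|²}` is comparable to
`|f(0)| + sup_z (|f'(z)|/(1+|z|)) e^{-(α/2)|z|²}`, with constants depending only on `α`. -/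
theorem fock_sup_norm_deriv_comparable (α : ℝ) (hα : 0 < α) :
    ∃ C : ℝ≥0, 0 < C ∧ ∀ f : ℂ → ℂ, Differentiable ℂ f →
      ((⨆ z : ℂ, ENNReal.ofReal (‖f z‖ * Real.exp (-(α / 2) * ‖z‖ ^ 2)))
        ≤ C * (ENNReal.ofReal (‖f 0‖) +
            ⨆ z : ℂ, ENNReal.ofReal (‖deriv f z‖ / (1 + ‖z‖) *
              Real.exp (-(α / 2) * ‖z‖ ^ 2)))) ∧
      ((ENNReal.ofReal (‖f 0‖) +
            ⨆ z : ℂ, ENNReal.ofReal (‖deriv f z‖ / (1 + ‖z‖) *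
              Real.exp (-(α / 2) * ‖z‖ ^ 2)))
        ≤ C * ⨆ z : ℂ, ENNReal.ofReal (‖f z‖ *
              Real.exp (-(α / 2) * ‖z‖ ^ 2))) := by
  have h16 : (0:ℝ) < 16/(3*α) := by positivity
  have h3a : (0:ℝ) < 3/α := by positivity
  have hEa : (0:ℝ) < Real.exp (α/2) := Real.exp_pos _
  set Creal : ℝ := 2*Real.exp (α/2) + 2 + 16/(3*α) + 3/α + α with hCreal
  have hCpos : 0 < Creal := by positivity
  have hCcoe : (Creal.toNNReal : ℝ≥0∞) = ENNReal.ofReal Creal := rfl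
  have hCne0 : (Creal.toNNReal : ℝ≥0∞) ≠ 0 :=
    ENNReal.coe_ne_zero.mpr (Real.toNNReal_pos.mpr hCpos).ne'
  refine ⟨Creal.toNNReal, Real.toNNReal_pos.mpr hCpos, fun f hf => ⟨?_, ?_⟩⟩
  · -- Direction 1
    set S := ⨆ z : ℂ, ENNReal.ofReal (‖deriv f z‖ / (1 + ‖z‖) *
        Real.exp (-(α / 2) * ‖z‖ ^ 2)) with hSdef
    by_cases hS : S = ⊤
    · rw [hS, add_top, ENNReal.mul_top hCne0]
      exact le_top
    · set B := S.toReal with hBdef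
      have hB0 : 0 ≤ B := ENNReal.toReal_nonneg
      have hSB : ENNReal.ofReal B = S := ENNReal.ofReal_toReal hS
      have hptB : ∀ w : ℂ, ‖deriv f w‖ / (1 + ‖w‖) *
          Real.exp (-(α / 2) * ‖w‖ ^ 2) ≤ B := by
        intro w
        have h1 := le_iSup (fun z : ℂ => ENNReal.ofReal (‖deriv f z‖ /
          (1 + ‖z‖) * Real.exp (-(α / 2) * ‖z‖ ^ 2))) w
        rw [← hSdef, ← hSB] at h1
        exact (ENNReal.ofReal_le_ofReal_iff hB0).mp h1
      have habs : ∀ w : ℂ, ‖deriv f w‖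
          ≤ B * ((1 + ‖w‖) * Real.exp (α/2 * ‖w‖ ^ 2)) := by
        intro w
        have h1p : (0:ℝ) < 1 + ‖w‖ := by positivity
        have hEne : Real.exp (α/2 * ‖w‖ ^ 2) ≠ 0 := (Real.exp_pos _).ne'
        have hEe : Real.exp (-(α / 2) * ‖w‖ ^ 2)
            = (Real.exp (α/2 * ‖w‖ ^ 2))⁻¹ := by
          rw [← Real.exp_neg]; congr 1; ring
        have h2 := hptB w
        rw [hEe] at h2
        have key : ‖deriv f w‖
            = (‖deriv f w‖ / (1 + ‖w‖) *
                (Real.exp (α/2 * ‖w‖ ^ 2))⁻¹)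
              * ((1 + ‖w‖) * Real.exp (α/2 * ‖w‖ ^ 2)) := by
          field_simp
        rw [key]
        exact mul_le_mul_of_nonneg_right h2 (by positivity)
      refine iSup_le fun z => ?_
      have hftc := fock_ftc_bound α hα hf hB0 habs z
      have hf0 : (0:ℝ) ≤ ‖f 0‖ := norm_nonneg _
      have hreal : ‖f z‖ * Real.exp (-(α / 2) * ‖z‖ ^ 2)
          ≤ Creal * (‖f 0‖ + B) := by
        have hEpos : 0 < Real.exp (α/2 * ‖z‖ ^ 2) := Real.exp_pos _
        have hEe : Real.exp (-(α / 2) * ‖z‖ ^ 2)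
            = (Real.exp (α/2 * ‖z‖ ^ 2))⁻¹ := by
          rw [← Real.exp_neg]; congr 1; ring
        rw [hEe]
        have h2 : ‖f z‖ * (Real.exp (α/2 * ‖z‖ ^ 2))⁻¹
            ≤ ‖f 0‖ + B * (2*Real.exp (α/2) + (1 + 16/(3*α)) + 3/α) := by
          have h3 := mul_le_mul_of_nonneg_right hftc (inv_nonneg.2 hEpos.le)
          calc ‖f z‖ * (Real.exp (α/2 * ‖z‖ ^ 2))⁻¹
              ≤ ((‖f 0‖ + B * (2*Real.exp (α/2) + (1 + 16/(3*α)) + 3/α))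
                  * Real.exp (α/2 * ‖z‖ ^ 2))
                * (Real.exp (α/2 * ‖z‖ ^ 2))⁻¹ := h3
            _ = ‖f 0‖ + B * (2*Real.exp (α/2) + (1 + 16/(3*α)) + 3/α) := by
                field_simp
        refine h2.trans ?_
        have hK : 2*Real.exp (α/2) + (1 + 16/(3*α)) + 3/α ≤ Creal := by
          rw [hCreal]; linarith
        have h1C : (1:ℝ) ≤ Creal := by rw [hCreal]; linarith
        nlinarith [mul_le_mul_of_nonneg_left hK hB0]
      calc ENNReal.ofReal (‖f z‖ * Real.exp (-(α / 2) * ‖z‖ ^ 2))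
          ≤ ENNReal.ofReal (Creal * (‖f 0‖ + B)) :=
            ENNReal.ofReal_le_ofReal hreal
        _ = ENNReal.ofReal Creal * (ENNReal.ofReal (‖f 0‖) + ENNReal.ofReal B) := by
            rw [ENNReal.ofReal_mul hCpos.le, ENNReal.ofReal_add hf0 hB0]
        _ = ↑Creal.toNNReal * (ENNReal.ofReal (‖f 0‖) + S) := by
            rw [hSB, hCcoe]
  · -- Direction 2
    set T := ⨆ z : ℂ, ENNReal.ofReal (‖f z‖ *
        Real.exp (-(α / 2) * ‖z‖ ^ 2)) with hTdef
    by_cases hT : T = ⊤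
    · rw [hT, ENNReal.mul_top hCne0]
      exact le_top
    · set M := T.toReal with hMdef
      have hM0 : 0 ≤ M := ENNReal.toReal_nonneg
      have hTM : ENNReal.ofReal M = T := ENNReal.ofReal_toReal hT
      have hptM : ∀ w : ℂ, ‖f w‖ * Real.exp (-(α / 2) * ‖w‖ ^ 2) ≤ M := by
        intro w
        have h1 := le_iSup (fun z : ℂ => ENNReal.ofReal (‖f z‖ *
          Real.exp (-(α / 2) * ‖z‖ ^ 2))) w
        rw [← hTdef, ← hTM] at h1
        exact (ENNReal.ofReal_le_ofReal_iff hM0).mp h1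
      have habs : ∀ w : ℂ, ‖f w‖ ≤ M * Real.exp (α/2 * ‖w‖ ^ 2) := by
        intro w
        have hEpos : 0 < Real.exp (α/2 * ‖w‖ ^ 2) := Real.exp_pos _
        have hEe : Real.exp (-(α / 2) * ‖w‖ ^ 2)
            = (Real.exp (α/2 * ‖w‖ ^ 2))⁻¹ := by
          rw [← Real.exp_neg]; congr 1; ring
        have h2 := hptM w
        rw [hEe] at h2
        have key : ‖f w‖
            = (‖f w‖ * (Real.exp (α/2 * ‖w‖ ^ 2))⁻¹)
              * Real.exp (α/2 * ‖w‖ ^ 2) := by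
          field_simp
        rw [key]
        exact mul_le_mul_of_nonneg_right h2 hEpos.le
      have hd2 : ∀ z : ℂ, ‖deriv f z‖ / (1 + ‖z‖) *
          Real.exp (-(α / 2) * ‖z‖ ^ 2) ≤ (Real.exp (α/2) + α) * M := by
        intro z
        have hc := fock_cauchy_est α hα hf habs z
        have hr0 : (0:ℝ) ≤ ‖z‖ := norm_nonneg z
        have h1p : (0:ℝ) < 1 + ‖z‖ := by positivity
        have hEpos : 0 < Real.exp (α/2 * ‖z‖ ^ 2) := Real.exp_pos _
        have htri : ‖deriv f z‖ ≤ M * Real.exp (α/2) * Real.exp (α/2 * ‖z‖ ^ 2)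
            + α * ‖z‖ * (M * Real.exp (α/2 * ‖z‖ ^ 2)) := by
          have h2 : ‖deriv f z‖
              ≤ ‖deriv f z - ↑α * (starRingEnd ℂ) z * f z‖
                + ‖↑α * (starRingEnd ℂ) z * f z‖ := by
            calc ‖deriv f z‖
                = ‖(deriv f z - ↑α * (starRingEnd ℂ) z * f z)
                    + ↑α * (starRingEnd ℂ) z * f z‖ := by rw [sub_add_cancel]
              _ ≤ _ := norm_add_le _ _
          have h3 : ‖↑α * (starRingEnd ℂ) z * f z‖
              = α * ‖z‖ * ‖f z‖ := by
            rw [norm_mul, norm_mul, Complex.norm_real, Real.norm_eq_abs, Complex.norm_conj, abs_of_pos hα]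
          have h4 : α * ‖z‖ * ‖f z‖
              ≤ α * ‖z‖ * (M * Real.exp (α/2 * ‖z‖ ^ 2)) :=
            mul_le_mul_of_nonneg_left (habs z) (by positivity)
          rw [h3] at h2
          linarith
        have hEe : Real.exp (-(α / 2) * ‖z‖ ^ 2)
            = (Real.exp (α/2 * ‖z‖ ^ 2))⁻¹ := by
          rw [← Real.exp_neg]; congr 1; ring
        rw [hEe, div_mul_eq_mul_div, div_le_iff₀ h1p]
        have h5 : ‖deriv f z‖ * (Real.exp (α/2 * ‖z‖ ^ 2))⁻¹
            ≤ M * Real.exp (α/2) + α * ‖z‖ * M := by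
          have h6 := mul_le_mul_of_nonneg_right htri (inv_nonneg.2 hEpos.le)
          calc ‖deriv f z‖ * (Real.exp (α/2 * ‖z‖ ^ 2))⁻¹
              ≤ (M * Real.exp (α/2) * Real.exp (α/2 * ‖z‖ ^ 2)
                  + α * ‖z‖ * (M * Real.exp (α/2 * ‖z‖ ^ 2)))
                * (Real.exp (α/2 * ‖z‖ ^ 2))⁻¹ := h6
            _ = M * Real.exp (α/2) + α * ‖z‖ * M := by field_simp
        nlinarith [mul_nonneg (mul_nonneg hM0 hr0) hEa.le, mul_nonneg hM0 hα.le]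
      have hA : ENNReal.ofReal (‖f 0‖) ≤ T := by
        have h1 := le_iSup (fun z : ℂ => ENNReal.ofReal (‖f z‖ *
          Real.exp (-(α / 2) * ‖z‖ ^ 2))) (0:ℂ)
        rw [← hTdef] at h1
        refine le_trans (le_of_eq ?_) h1
        norm_num
      have hS' : (⨆ z : ℂ, ENNReal.ofReal (‖deriv f z‖ / (1 + ‖z‖) *
          Real.exp (-(α / 2) * ‖z‖ ^ 2)))
          ≤ ENNReal.ofReal ((Real.exp (α/2) + α) * M) :=
        iSup_le fun z => ENNReal.ofReal_le_ofReal (hd2 z)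
      calc ENNReal.ofReal (‖f 0‖) + (⨆ z : ℂ, ENNReal.ofReal
            (‖deriv f z‖ / (1 + ‖z‖) *
              Real.exp (-(α / 2) * ‖z‖ ^ 2)))
          ≤ T + ENNReal.ofReal ((Real.exp (α/2) + α) * M) := add_le_add hA hS'
        _ = T + ENNReal.ofReal (Real.exp (α/2) + α) * T := by
            rw [ENNReal.ofReal_mul (by positivity), hTM]
        _ = (1 + ENNReal.ofReal (Real.exp (α/2) + α)) * T := by rw [add_mul, one_mul]
        _ ≤ ↑Creal.toNNReal * T := by
            refine mul_le_mul_left ?_ T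
            rw [hCcoe, ← ENNReal.ofReal_one, ← ENNReal.ofReal_add zero_le_one (by positivity)]
            exact ENNReal.ofReal_le_ofReal (by rw [hCreal]; linarith)
end

section
/- For an entire function ψ and α > 0, the integral ∫_ℂ e^{(pα/2)(|ψ(z)|² - |z|²)} dm(z) is finite if and only if ψ(z) = az + b for some a, b ∈ ℂ with |a| < 1. -/
set_option maxHeartbeats 1000000

open MeasureTheory Complex Filter Topology ENNReal NNReal Metric Set

namespace GaussianCompAux
lemma gauss_int (b : ℝ) (hb : 0 < b) : Integrable (fun v : ℂ => Real.exp (-b * ‖v‖^2)) := by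
  have h := GaussianFourier.integrable_cexp_neg_mul_sq_norm_add (V := ℂ) (b := (b:ℂ)) (by simpa using hb) 0 0
  refine h.norm.congr (Eventually.of_forall fun v => ?_)
  simp only [Complex.norm_exp]
  congr 1
  simp
  left; norm_cast

lemma reverse_dir (c : ℝ) (hc : 0 < c) (a b : ℂ) (ha : ‖a‖ < 1) :
    (∫⁻ z : ℂ, ENNReal.ofReal (Real.exp (c * (‖a*z+b‖ ^ 2 - ‖z‖ ^ 2)))) < ⊤ := by
  set δ : ℝ := 1 - ‖a‖ ^ 2 with hδdef
  have hδ : 0 < δ := by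
    have : ‖a‖ ^ 2 < 1 := by
      nlinarith [norm_nonneg a]
    simp [hδdef]; linarith
  set K : ℝ := ‖b‖ ^ 2 + (2/δ) * ‖b‖ ^ 2 with hK
  have key : ∀ z : ℂ, ‖a*z+b‖ ^ 2 - ‖z‖ ^ 2 ≤ -(δ/2) * ‖z‖ ^ 2 + K := by
    intro z
    have h1 : ‖a*z+b‖ ≤ ‖a‖ * ‖z‖ + ‖b‖ := by
      simpa using (norm_add_le (a*z) b)
    have h2 : ‖a*z+b‖ ^ 2 ≤ (‖a‖ * ‖z‖ + ‖b‖) ^ 2 := by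
      have := norm_nonneg (a*z+b)
      nlinarith
    have hza : ‖a‖ ≤ 1 := ha.le
    have h3 : 2 * ‖b‖ * ‖z‖ ≤ (δ/2) * ‖z‖ ^ 2 + (2/δ) * ‖b‖ ^ 2 := by
      have hs : Real.sqrt (δ/2) * Real.sqrt (2/δ) = 1 := by
        rw [← Real.sqrt_mul (by positivity), show δ/2 * (2/δ) = 1 by field_simp, Real.sqrt_one]
      have h4 := two_mul_le_add_sq (Real.sqrt (δ/2) * ‖z‖) (Real.sqrt (2/δ) * ‖b‖)
      have e1 : 2 * (Real.sqrt (δ/2) * ‖z‖) * (Real.sqrt (2/δ) * ‖b‖)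
          = (Real.sqrt (δ/2) * Real.sqrt (2/δ)) * (2 * ‖z‖ * ‖b‖) := by ring
      have e2 : (Real.sqrt (δ/2) * ‖z‖)^2 = (δ/2) * ‖z‖ ^2 := by
        rw [mul_pow, Real.sq_sqrt (by positivity)]
      have e3 : (Real.sqrt (2/δ) * ‖b‖)^2 = (2/δ) * ‖b‖ ^2 := by
        rw [mul_pow, Real.sq_sqrt (by positivity)]
      rw [e1, hs, one_mul, e2, e3] at h4
      linarith
    have hz := norm_nonneg z
    have hbnn := norm_nonneg b
    have hann := norm_nonneg a
    nlinarith [sq_nonneg (‖z‖), mul_nonneg hz hbnn]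
  have hint : Integrable (fun z : ℂ => Real.exp (c*K) * Real.exp (-(c*δ/2) * ‖z‖^2)) :=
    (gauss_int (c*δ/2) (by positivity)).const_mul _
  calc (∫⁻ z : ℂ, ENNReal.ofReal (Real.exp (c * (‖a*z+b‖ ^ 2 - ‖z‖ ^ 2))))
      ≤ ∫⁻ z : ℂ, ENNReal.ofReal (Real.exp (c*K) * Real.exp (-(c*δ/2) * ‖z‖^2)) := by
        refine lintegral_mono fun z => ENNReal.ofReal_le_ofReal ?_
        rw [← Real.exp_add]
        apply Real.exp_le_exp.2
        have := key z
        have : c * (‖a*z+b‖ ^ 2 - ‖z‖ ^ 2) ≤ c * (-(δ/2) * ‖z‖ ^ 2 + K) :=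
          mul_le_mul_of_nonneg_left this hc.le
        have hnz : ‖z‖ = ‖z‖ := rfl
        rw [hnz]
        nlinarith
    _ = ENNReal.ofReal (∫ z : ℂ, Real.exp (c*K) * Real.exp (-(c*δ/2) * ‖z‖^2)) := by
        rw [← ofReal_integral_eq_lintegral_ofReal hint]
        exact Eventually.of_forall fun z => by positivity
    _ < ⊤ := ENNReal.ofReal_lt_top

lemma circle_submean (c : ℝ) (hc : 0 < c) (ψ : ℂ → ℂ) (hψ : Differentiable ℂ ψ)
    (z : ℂ) (r : ℝ) (hr : 0 < r) :
    2 * Real.pi * Real.exp (c * ‖ψ z‖ ^ 2)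
      ≤ ∫ θ in (0:ℝ)..(2*Real.pi), Real.exp (c * ‖ψ (circleMap z r θ)‖ ^ 2) := by
  set F : ℂ → ℂ := fun w => Complex.exp (2*c * ψ w * (starRingEnd ℂ) (ψ z)) with hF
  have hFd : Differentiable ℂ F := (hψ.const_mul _ |>.mul_const _).cexp
  have hcauchy : (∮ w in C(z, r), (w - z)⁻¹ • F w) = (2 * Real.pi * Complex.I : ℂ) • F z :=
    (hFd.differentiableOn).circleIntegral_sub_inv_smul (mem_ball_self hr)
  have hunfold : (∮ w in C(z, r), (w - z)⁻¹ • F w)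
      = ∫ θ in (0:ℝ)..(2*Real.pi), Complex.I * F (circleMap z r θ) := by
    rw [circleIntegral]
    congr 1 with θ
    rw [deriv_circleMap, circleMap_sub_center]
    have hne : circleMap 0 r θ ≠ 0 := circleMap_ne_center hr.ne'
    field_simp
    rw [smul_eq_mul, smul_eq_mul, one_div, mul_comm (circleMap 0 r θ) I, mul_assoc,
      ← mul_assoc (circleMap 0 r θ), mul_inv_cancel₀ hne, one_mul]
  have hInt : ∫ θ in (0:ℝ)..(2*Real.pi), F (circleMap z r θ)
      = (2 * Real.pi : ℂ) * F z := by
    have := hcauchy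
    rw [hunfold] at this
    rw [intervalIntegral.integral_const_mul] at this
    have hI : (Complex.I : ℂ) ≠ 0 := Complex.I_ne_zero
    have : Complex.I * ∫ θ in (0:ℝ)..(2*Real.pi), F (circleMap z r θ)
        = Complex.I * ((2 * Real.pi : ℂ) * F z) := by
      rw [this]; simp [smul_eq_mul]; ring
    exact mul_left_cancel₀ hI this
  -- |F z| = exp (2c |ψ z|^2)
  have hFz : ‖F z‖ = Real.exp (2 * c * ‖ψ z‖ ^ 2) := by
    rw [hF]
    simp only [Complex.norm_exp]
    congr 1
    have : ψ z * (starRingEnd ℂ) (ψ z) = (‖ψ z‖ ^ 2 : ℝ) := by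
      rw [Complex.mul_conj]
      norm_cast
      exact (Complex.sq_norm _).symm
    rw [mul_assoc, this,
      show (2 * (c:ℂ) * ((‖ψ z‖^2 : ℝ):ℂ)) = ((2*c*‖ψ z‖^2 : ℝ) : ℂ) by push_cast; ring,
      Complex.ofReal_re]
  -- |F w| ≤ exp (c |ψ w|^2 + c |ψ z|^2)
  have hFb : ∀ w, ‖F w‖ ≤ Real.exp (c * ‖ψ w‖ ^ 2 + c * ‖ψ z‖ ^ 2) := by
    intro w
    rw [hF]
    simp only [Complex.norm_exp]
    apply Real.exp_le_exp.2
    calc (2*c * ψ w * (starRingEnd ℂ) (ψ z)).re ≤ ‖2*c * ψ w * (starRingEnd ℂ) (ψ z)‖ :=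
        Complex.re_le_norm _
      _ = 2*c * (‖ψ w‖ * ‖ψ z‖) := by
          simp [map_mul, norm_mul, Complex.norm_conj, abs_of_pos hc]
          ring
      _ ≤ c * ‖ψ w‖ ^ 2 + c * ‖ψ z‖ ^ 2 := by
          nlinarith [two_mul_le_add_sq (‖ψ w‖) (‖ψ z‖), norm_nonneg (ψ w), norm_nonneg (ψ z)]
  -- continuity
  have hcont : Continuous fun θ : ℝ => ‖F (circleMap z r θ)‖ :=
    continuous_norm.comp (hFd.continuous.comp (continuous_circleMap z r))
  have hcont2 : Continuous fun θ : ℝ => Real.exp (c * ‖ψ (circleMap z r θ)‖ ^ 2) :=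
    (Real.continuous_exp.comp ((continuous_const.mul (((continuous_norm.comp (hψ.continuous.comp (continuous_circleMap z r))).pow 2)))))
  have h2pi : (0:ℝ) ≤ 2 * Real.pi := by positivity
  have step1 : 2 * Real.pi * Real.exp (2 * c * ‖ψ z‖ ^ 2)
      ≤ ∫ θ in (0:ℝ)..(2*Real.pi), ‖F (circleMap z r θ)‖ := by
    have : ‖(2 * (Real.pi:ℂ)) * F z‖ = 2 * Real.pi * ‖F z‖ := by
      rw [norm_mul, norm_mul, Complex.norm_two, Complex.norm_real, Real.norm_eq_abs, _root_.abs_of_nonneg Real.pi_pos.le, mul_assoc]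
    calc 2 * Real.pi * Real.exp (2 * c * ‖ψ z‖ ^ 2)
        = ‖(2 * Real.pi : ℂ) * F z‖ := by rw [this, hFz]
      _ = ‖∫ θ in (0:ℝ)..(2*Real.pi), F (circleMap z r θ)‖ := by rw [hInt]
      _ ≤ ∫ θ in (0:ℝ)..(2*Real.pi), ‖F (circleMap z r θ)‖ := by
          simpa using intervalIntegral.norm_integral_le_integral_norm (f := fun θ => F (circleMap z r θ)) h2pi
  have step2 : ∫ θ in (0:ℝ)..(2*Real.pi), ‖F (circleMap z r θ)‖
      ≤ ∫ θ in (0:ℝ)..(2*Real.pi), Real.exp (c * ‖ψ (circleMap z r θ)‖ ^ 2 + c * ‖ψ z‖ ^ 2) := by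
    apply intervalIntegral.integral_mono_on h2pi
    · exact (hcont.intervalIntegrable _ _)
    · exact ((hcont2.mul (continuous_const : Continuous fun _ : ℝ => Real.exp (c * ‖ψ z‖ ^ 2))).congr (by intro θ; simp only [Pi.mul_apply, ← Real.exp_add])).intervalIntegrable _ _
    · intro θ _; exact hFb _
  have step3 : ∫ θ in (0:ℝ)..(2*Real.pi), Real.exp (c * ‖ψ (circleMap z r θ)‖ ^ 2 + c * ‖ψ z‖ ^ 2)
      = (∫ θ in (0:ℝ)..(2*Real.pi), Real.exp (c * ‖ψ (circleMap z r θ)‖ ^ 2)) * Real.exp (c * ‖ψ z‖ ^ 2) := by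
    rw [← intervalIntegral.integral_mul_const]
    congr 1 with θ
    rw [← Real.exp_add]
  have hepos : 0 < Real.exp (c * ‖ψ z‖ ^ 2) := Real.exp_pos _
  have final : 2 * Real.pi * Real.exp (2 * c * ‖ψ z‖ ^ 2)
      ≤ (∫ θ in (0:ℝ)..(2*Real.pi), Real.exp (c * ‖ψ (circleMap z r θ)‖ ^ 2)) * Real.exp (c * ‖ψ z‖ ^ 2) := by
    rw [← step3]; exact le_trans step1 step2
  have hsplit : Real.exp (2 * c * ‖ψ z‖ ^ 2)
      = Real.exp (c * ‖ψ z‖ ^ 2) * Real.exp (c * ‖ψ z‖ ^ 2) := by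
    rw [← Real.exp_add]; ring_nf
  rw [hsplit] at final
  have := (mul_le_mul_iff_left₀ hepos).1 (by linarith [final] : (2 * Real.pi * Real.exp (c * ‖ψ z‖ ^ 2)) * Real.exp (c * ‖ψ z‖ ^ 2) ≤ (∫ θ in (0:ℝ)..(2*Real.pi), Real.exp (c * ‖ψ (circleMap z r θ)‖ ^ 2)) * Real.exp (c * ‖ψ z‖ ^ 2))
  linarith

lemma area_submean (c : ℝ) (hc : 0 < c) (ψ : ℂ → ℂ) (hψ : Differentiable ℂ ψ) (z : ℂ) :
    Real.pi * Real.exp (c * ‖ψ z‖ ^ 2)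
      ≤ ∫ w in ball z 1, Real.exp (c * ‖ψ w‖ ^ 2) := by
  classical
  set u : ℂ → ℝ := fun w => Real.exp (c * ‖ψ w‖ ^ 2) with hu
  have hucont : Continuous u :=
    Real.continuous_exp.comp (continuous_const.mul ((continuous_norm.comp hψ.continuous).pow 2))
  set G : ℝ × ℝ → ℝ := fun p => p.1 * u (z + p.1 * (Real.cos p.2 + Real.sin p.2 * Complex.I)) with hG
  have hGcont : Continuous G := by
    apply continuous_fst.mul
    apply hucont.comp
    apply continuous_const.add
    exact (Complex.continuous_ofReal.comp continuous_fst).mul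
      ((Complex.continuous_ofReal.comp (Real.continuous_cos.comp continuous_snd)).add
        ((Complex.continuous_ofReal.comp (Real.continuous_sin.comp continuous_snd)).mul continuous_const))
  set S : Set (ℝ × ℝ) := Ioo (0:ℝ) 1 ×ˢ Ioo (-Real.pi) Real.pi with hS
  -- Step 1: translate
  have step1 : ∫ w in ball z 1, u w = ∫ w, (ball (0:ℂ) 1).indicator (fun w => u (z + w)) w := by
    rw [← integral_indicator measurableSet_ball]
    rw [← integral_add_left_eq_self (fun w => (ball z 1).indicator u w) z]
    congr 1 with w
    rw [Set.indicator_apply, Set.indicator_apply]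
    have : z + w ∈ ball z 1 ↔ w ∈ ball (0:ℂ) 1 := by
      simp [mem_ball, dist_eq_norm]
    simp only [this]
  -- Step 2: polar coordinates
  have step2 : (∫ p in polarCoord.target, p.1 • (ball (0:ℂ) 1).indicator (fun w => u (z + w)) (Complex.polarCoord.symm p))
      = ∫ w, (ball (0:ℂ) 1).indicator (fun w => u (z + w)) w :=
    Complex.integral_comp_polarCoord_symm _
  -- Step 3: restrict to S
  have hSsub : S ⊆ polarCoord.target := by
    rintro ⟨r, θ⟩ ⟨hr, hθ⟩
    exact ⟨hr.1, hθ⟩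
  have step3 : (∫ p in polarCoord.target, p.1 • (ball (0:ℂ) 1).indicator (fun w => u (z + w)) (Complex.polarCoord.symm p))
      = ∫ p in S, p.1 • (ball (0:ℂ) 1).indicator (fun w => u (z + w)) (Complex.polarCoord.symm p) := by
    apply setIntegral_eq_of_subset_of_ae_diff_eq_zero
      (polarCoord.open_target.measurableSet.nullMeasurableSet) hSsub
    refine Eventually.of_forall fun p hp => ?_
    have hp1 : 0 < p.1 := hp.1.1
    have hnotmem : Complex.polarCoord.symm p ∉ ball (0:ℂ) 1 := by
      have habs : ‖Complex.polarCoord.symm p‖ = |p.1| := Complex.norm_polarCoord_symm p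
      have hge : (1:ℝ) ≤ p.1 := by
        by_contra hlt
        push_neg at hlt
        exact hp.2 ⟨⟨hp1, hlt⟩, hp.1.2⟩
      simp only [mem_ball, dist_zero_right, habs, abs_of_pos hp1, not_lt]
      exact hge
    rw [Set.indicator_of_notMem hnotmem, smul_zero]
  -- Step 4: on S the indicator is the function itself
  have step4 : (∫ p in S, p.1 • (ball (0:ℂ) 1).indicator (fun w => u (z + w)) (Complex.polarCoord.symm p))
      = ∫ p in S, G p := by
    apply setIntegral_congr_fun (by measurability)
    rintro ⟨r, θ⟩ ⟨hr, hθ⟩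
    have hmem : Complex.polarCoord.symm (r, θ) ∈ ball (0:ℂ) 1 := by
      have habs : ‖Complex.polarCoord.symm (r, θ)‖ = |r| := Complex.norm_polarCoord_symm _
      simp only [mem_ball, dist_zero_right, habs, abs_of_pos hr.1]
      exact hr.2
    simp only [Set.indicator_of_mem hmem, smul_eq_mul, hG]
    rw [Complex.polarCoord_symm_apply]
  -- integrability of G on S
  have hGint : IntegrableOn G S := by
    apply (hGcont.continuousOn.integrableOn_compact (isCompact_Icc (a := ((0:ℝ), -Real.pi)) (b := (1, Real.pi)))).mono_set
    rintro ⟨r, θ⟩ ⟨hr, hθ⟩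
    exact ⟨⟨hr.1.le, hθ.1.le⟩, ⟨hr.2.le, hθ.2.le⟩⟩
  -- Step 5: Fubini
  have hGint' : Integrable G (((volume : Measure ℝ).restrict (Ioo 0 1)).prod
      ((volume : Measure ℝ).restrict (Ioo (-Real.pi) Real.pi))) := by
    rw [Measure.prod_restrict, ← Measure.volume_eq_prod]; exact hGint
  have step5 : ∫ p in S, G p = ∫ r in Ioo (0:ℝ) 1, ∫ θ in Ioo (-Real.pi) Real.pi, G (r, θ) := by
    calc ∫ p in S, G p
        = ∫ p, G p ∂(((volume : Measure ℝ).restrict (Ioo 0 1)).prod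
            ((volume : Measure ℝ).restrict (Ioo (-Real.pi) Real.pi))) := by
          rw [Measure.prod_restrict, ← Measure.volume_eq_prod, hS]
      _ = ∫ r, ∫ θ, G (r, θ) ∂((volume : Measure ℝ).restrict (Ioo (-Real.pi) Real.pi))
            ∂((volume : Measure ℝ).restrict (Ioo 0 1)) := MeasureTheory.integral_prod _ hGint'
  -- step 6 : inner bound
  have hcirc : ∀ r θ : ℝ, z + (r:ℂ) * (Real.cos θ + Real.sin θ * Complex.I) = circleMap z r θ := by
    intro r θ
    rw [circleMap, Complex.exp_mul_I, ← Complex.ofReal_cos, ← Complex.ofReal_sin]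
  have step6 : ∀ r ∈ Ioo (0:ℝ) 1, (2*Real.pi) * u z * r
      ≤ ∫ θ in Ioo (-Real.pi) Real.pi, G (r, θ) := by
    intro r hr
    have h1 : ∫ θ in Ioo (-Real.pi) Real.pi, G (r, θ)
        = r * ∫ θ in Ioo (-Real.pi) Real.pi, u (circleMap z r θ) := by
      simp only [hG, hcirc]
      exact MeasureTheory.integral_const_mul _ _
    have hper : Function.Periodic (fun θ => u (circleMap z r θ)) (2*Real.pi) :=
      fun θ => congrArg u (periodic_circleMap z r θ)
    have h2 : ∫ θ in Ioo (-Real.pi) Real.pi, u (circleMap z r θ)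
        = ∫ θ in (0:ℝ)..(2*Real.pi), u (circleMap z r θ) := by
      rw [← integral_Ioc_eq_integral_Ioo,
        ← intervalIntegral.integral_of_le (by linarith [Real.pi_pos] : -Real.pi ≤ Real.pi)]
      have h3 := hper.intervalIntegral_add_eq (-Real.pi) 0
      rw [show -Real.pi + 2*Real.pi = Real.pi by ring, zero_add] at h3
      exact h3
    have h4 := circle_submean c hc ψ hψ z r hr.1
    rw [h1, h2]
    calc (2*Real.pi) * u z * r = r * (2 * Real.pi * u z) := by ring
      _ ≤ r * ∫ θ in (0:ℝ)..(2*Real.pi), u (circleMap z r θ) :=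
          mul_le_mul_of_nonneg_left h4 hr.1.le
  -- step 7 : outer bound
  have houter_int : Integrable (fun r => ∫ θ, G (r, θ)
      ∂((volume : Measure ℝ).restrict (Ioo (-Real.pi) Real.pi)))
      ((volume : Measure ℝ).restrict (Ioo 0 1)) := hGint'.integral_prod_left
  have hlow_int : IntegrableOn (fun r : ℝ => (2*Real.pi) * u z * r) (Ioo (0:ℝ) 1) := by
    apply ((continuous_const.mul continuous_id).continuousOn.integrableOn_compact
      (isCompact_Icc (a := (0:ℝ)) (b := 1))).mono_set Ioo_subset_Icc_self
  have step7 : ∫ r in Ioo (0:ℝ) 1, (2*Real.pi) * u z * r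
      ≤ ∫ r in Ioo (0:ℝ) 1, ∫ θ in Ioo (-Real.pi) Real.pi, G (r, θ) :=
    setIntegral_mono_on hlow_int houter_int measurableSet_Ioo step6
  have hval : ∫ r in Ioo (0:ℝ) 1, (2*Real.pi) * u z * r = Real.pi * u z := by
    rw [← integral_Ioc_eq_integral_Ioo, ← intervalIntegral.integral_of_le zero_le_one,
      intervalIntegral.integral_const_mul, integral_id]
    ring
  calc Real.pi * u z = ∫ r in Ioo (0:ℝ) 1, (2*Real.pi) * u z * r := hval.symm
    _ ≤ ∫ r in Ioo (0:ℝ) 1, ∫ θ in Ioo (-Real.pi) Real.pi, G (r, θ) := step7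
    _ = ∫ p in S, G p := step5.symm
    _ = ∫ p in S, p.1 • (ball (0:ℂ) 1).indicator (fun w => u (z + w)) (Complex.polarCoord.symm p) := step4.symm
    _ = ∫ p in polarCoord.target, p.1 • (ball (0:ℂ) 1).indicator (fun w => u (z + w)) (Complex.polarCoord.symm p) := step3.symm
    _ = ∫ w, (ball (0:ℂ) 1).indicator (fun w => u (z + w)) w := step2
    _ = ∫ w in ball z 1, u w := step1.symm

lemma growth (c : ℝ) (hc : 0 < c) (ψ : ℂ → ℂ) (hψ : Differentiable ℂ ψ)
    (hfin : (∫⁻ z : ℂ, ENNReal.ofReal (Real.exp (c * (‖ψ z‖ ^ 2 - ‖z‖ ^ 2)))) < ⊤) :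
    ∃ C : ℝ, 0 ≤ C ∧ ∀ z : ℂ, ‖ψ z‖ ≤ ‖z‖ + C := by
  set v : ℂ → ℝ := fun z => Real.exp (c * (‖ψ z‖ ^ 2 - ‖z‖ ^ 2)) with hv
  have hvcont : Continuous v := by
    apply Real.continuous_exp.comp
    apply continuous_const.mul
    exact ((continuous_norm.comp hψ.continuous).pow 2).sub ((continuous_norm).pow 2)
  set u : ℂ → ℝ := fun w => Real.exp (c * ‖ψ w‖ ^ 2) with hu
  have hucont : Continuous u :=
    Real.continuous_exp.comp (continuous_const.mul ((continuous_norm.comp hψ.continuous).pow 2))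
  set I : ℝ := (∫⁻ z : ℂ, ENNReal.ofReal (v z)).toReal with hI
  have hπ := Real.pi_pos
  have key : ∀ z : ℂ, Real.pi * u z ≤ Real.exp (c * (‖z‖ + 1)^2) * I := by
    intro z
    set M : ℝ := Real.exp (c * (‖z‖ + 1)^2) with hM
    have h1 := area_submean c hc ψ hψ z
    have hvint : IntegrableOn v (ball z 1) :=
      (hvcont.continuousOn.integrableOn_compact (isCompact_closedBall z 1)).mono_set ball_subset_closedBall
    have huint : IntegrableOn u (ball z 1) :=
      (hucont.continuousOn.integrableOn_compact (isCompact_closedBall z 1)).mono_set ball_subset_closedBall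
    have h2 : ∫ w in ball z 1, u w ≤ ∫ w in ball z 1, M * v w := by
      apply setIntegral_mono_on huint (hvint.const_mul M) measurableSet_ball
      intro w hw
      have habs : ‖w‖ ≤ ‖z‖ + 1 := by
        have : ‖w - z‖ < 1 := by
          simpa [Complex.dist_eq] using (mem_ball.1 hw)
        calc ‖w‖ = ‖z + (w - z)‖ := by congr 1; ring
          _ ≤ ‖z‖ + ‖w - z‖ := norm_add_le _ _
          _ ≤ ‖z‖ + 1 := by linarith
      have hsq : ‖w‖ ^ 2 ≤ (‖z‖ + 1)^2 := by
        have := norm_nonneg w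
        nlinarith
      have e1 : u w = Real.exp (c * ‖ψ w‖ ^ 2) := rfl
      have e2 : M * v w = Real.exp (c * (‖z‖ + 1)^2
          + c * (‖ψ w‖ ^ 2 - ‖w‖ ^ 2)) := (Real.exp_add _ _).symm
      rw [e1, e2]
      apply Real.exp_le_exp.2
      nlinarith
    have h3 : ∫ w in ball z 1, v w ≤ I := by
      have hveq : ∫ w in ball z 1, v w = (∫⁻ w in ball z 1, ENNReal.ofReal (v w)).toReal := by
        rw [integral_eq_lintegral_of_nonneg_ae (Eventually.of_forall fun w => (Real.exp_pos _).le)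
          (hvcont.aestronglyMeasurable)]
      rw [hveq]
      exact ENNReal.toReal_mono hfin.ne (setLIntegral_le_lintegral _ _)
    calc Real.pi * u z ≤ ∫ w in ball z 1, u w := h1
      _ ≤ ∫ w in ball z 1, M * v w := h2
      _ = M * ∫ w in ball z 1, v w := by rw [MeasureTheory.integral_const_mul]
      _ ≤ M * I := mul_le_mul_of_nonneg_left h3 (Real.exp_pos _).le
  have hIpos : 0 < I := by
    have h0 := key 0
    nlinarith [Real.exp_pos (c * ‖ψ 0‖ ^ 2), Real.exp_pos (c * (‖(0:ℂ)‖ + 1)^2),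
      mul_pos hπ (Real.exp_pos (c * ‖ψ 0‖ ^ 2))]
  set L : ℝ := Real.log (I / Real.pi) / c with hL
  have hsq : ∀ z : ℂ, ‖ψ z‖ ^ 2 ≤ (‖z‖ + 1)^2 + L := by
    intro z
    have h5 : u z ≤ (I / Real.pi) * Real.exp (c * (‖z‖ + 1)^2) := by
      have := key z
      rw [div_mul_eq_mul_div, le_div_iff₀ hπ]
      nlinarith
    have hIπ : 0 < I / Real.pi := div_pos hIpos hπ
    have h6 := Real.log_le_log (Real.exp_pos _) h5
    rw [Real.log_exp, Real.log_mul hIπ.ne' (Real.exp_pos _).ne', Real.log_exp] at h6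
    have : c * ‖ψ z‖ ^ 2 ≤ c * ((‖z‖ + 1)^2 + L) := by
      rw [hL]; rw [mul_add, mul_div_cancel₀ _ hc.ne']; linarith
    exact le_of_mul_le_mul_left (by linarith) hc
  refine ⟨1 + Real.sqrt (max L 0), by positivity, fun z => ?_⟩
  have h7 : ‖ψ z‖ ^ 2 ≤ (‖z‖ + 1 + Real.sqrt (max L 0))^2 := by
    have h8 : Real.sqrt (max L 0) ^ 2 = max L 0 := Real.sq_sqrt (le_max_right _ _)
    have h9 := hsq z
    have h10 : L ≤ max L 0 := le_max_left _ _
    nlinarith [Real.sqrt_nonneg (max L 0), norm_nonneg z]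
  have hrhs : 0 ≤ ‖z‖ + 1 + Real.sqrt (max L 0) := by
    positivity
  calc ‖ψ z‖ = Real.sqrt (‖ψ z‖ ^ 2) := (Real.sqrt_sq (norm_nonneg _)).symm
    _ ≤ Real.sqrt ((‖z‖ + 1 + Real.sqrt (max L 0))^2) := Real.sqrt_le_sqrt h7
    _ = ‖z‖ + 1 + Real.sqrt (max L 0) := Real.sqrt_sq hrhs
    _ = ‖z‖ + (1 + Real.sqrt (max L 0)) := by ring

lemma linear_of_growth (ψ : ℂ → ℂ) (hψ : Differentiable ℂ ψ) (C : ℝ)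
    (hC : ∀ z : ℂ, ‖ψ z‖ ≤ ‖z‖ + C) :
    ∃ a b : ℂ, ‖a‖ ≤ 1 ∧ ∀ z : ℂ, ψ z = a * z + b := by
  have hd1 : ∀ z : ℂ, ‖deriv ψ z‖ ≤ 1 := by
    intro z
    have key : ∀ R : ℝ, 0 < R → ‖deriv ψ z‖ ≤ (‖z‖ + R + C) / R := by
      intro R hR
      apply Complex.norm_deriv_le_of_forall_mem_sphere_norm_le hR hψ.diffContOnCl
      intro w hw
      have hwz : ‖w - z‖ = R := by
        simpa [Complex.dist_eq] using (mem_sphere.1 hw)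
      have : ‖w‖ ≤ ‖z‖ + R := by
        calc ‖w‖ = ‖z + (w - z)‖ := by congr 1; ring
          _ ≤ ‖z‖ + ‖w - z‖ := norm_add_le _ _
          _ = ‖z‖ + R := by rw [hwz]
      calc ‖ψ w‖ = ‖ψ w‖ := rfl
        _ ≤ ‖w‖ + C := hC w
        _ ≤ ‖z‖ + R + C := by linarith
    have hlim : Tendsto (fun R : ℝ => (‖z‖ + R + C) / R) atTop (𝓝 1) := by
      have h1 : Tendsto (fun R : ℝ => (‖z‖ + C) / R + 1) atTop (𝓝 (0 + 1)) :=
        (Tendsto.div_atTop tendsto_const_nhds tendsto_id).add tendsto_const_nhds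
      rw [zero_add] at h1
      apply h1.congr'
      filter_upwards [eventually_ne_atTop (0:ℝ)] with R hR
      field_simp
      ring
    exact ge_of_tendsto hlim (by filter_upwards [eventually_gt_atTop (0:ℝ)] with R hR using key R hR)
  have hda : Differentiable ℂ (deriv ψ) :=
    Complex.analyticOnNhd_univ_iff_differentiable.1
      ((Complex.analyticOnNhd_univ_iff_differentiable.2 hψ).deriv)
  have hbd : Bornology.IsBounded (Set.range (deriv ψ)) := by
    rw [Metric.isBounded_iff_subset_closedBall 0]
    exact ⟨1, by rintro _ ⟨z, rfl⟩; simpa [Complex.dist_eq] using hd1 z⟩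
  set a : ℂ := deriv ψ 0 with ha
  have hconst : ∀ z : ℂ, deriv ψ z = a := fun z => hda.apply_eq_apply_of_bounded hbd z 0
  set g : ℂ → ℂ := fun z => ψ z - a * z with hg
  have hgd : Differentiable ℂ g := hψ.sub (differentiable_id.const_mul a)
  have hgz : ∀ z : ℂ, deriv g z = 0 := by
    intro z
    rw [hg]
    have h1 : HasDerivAt (fun z : ℂ => ψ z - a * z) (deriv ψ z - a) z := by
      exact ((hψ z).hasDerivAt.sub ((hasDerivAt_id z).const_mul a)).congr_deriv (by ring)
    rw [h1.deriv, hconst z, sub_self]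
  refine ⟨a, ψ 0, by simpa using hd1 0, fun z => ?_⟩
  have := is_const_of_deriv_eq_zero hgd hgz z 0
  simp only [hg] at this
  have h0 : ψ 0 - a * 0 = ψ 0 := by ring
  rw [h0] at this
  linear_combination this

lemma not_finite_of_abs_one (c : ℝ) (hc : 0 < c) (a b : ℂ) (ha : ‖a‖ = 1) :
    ¬ ((∫⁻ z : ℂ, ENNReal.ofReal (Real.exp (c * (‖a*z+b‖ ^ 2 - ‖z‖ ^ 2)))) < ⊤) := by
  intro hfin
  set f : ℂ → ℝ≥0∞ := fun z => ENNReal.ofReal (Real.exp (c * (‖a*z+b‖ ^ 2 - ‖z‖ ^ 2))) with hf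
  have hmeas : Measurable f := by
    apply ENNReal.measurable_ofReal.comp
    apply Real.measurable_exp.comp
    apply Measurable.const_mul
    apply Measurable.sub
    · exact (continuous_norm.measurable.comp ((measurable_id.const_mul a).add_const b)).pow_const 2
    · exact continuous_norm.measurable.pow_const 2
  -- pointwise : 2 ≤ f z + f (-z)
  have hpt : ∀ z : ℂ, (2 : ℝ≥0∞) ≤ f z + f (-z) := by
    intro z
    have habs : ∀ w : ℂ, ‖a*w+b‖ ^ 2 - ‖w‖ ^ 2
        = 2 * (a * w * (starRingEnd ℂ) b).re + ‖b‖ ^ 2 := by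
      intro w
      rw [← Complex.normSq_eq_norm_sq, ← Complex.normSq_eq_norm_sq, ← Complex.normSq_eq_norm_sq,
        Complex.normSq_add, Complex.normSq_mul]
      have : Complex.normSq a = 1 := by rw [Complex.normSq_eq_norm_sq, ha]; norm_num
      rw [this, one_mul]
      ring
    set X : ℝ := 2 * (a * z * (starRingEnd ℂ) b).re with hX
    have hz : ‖a*z+b‖ ^ 2 - ‖z‖ ^ 2 = X + ‖b‖ ^ 2 := habs z
    have hnz : ‖a*(-z)+b‖ ^ 2 - ‖-z‖ ^ 2 = -X + ‖b‖ ^ 2 := by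
      have := habs (-z)
      rw [this]
      simp [hX]
      ring
    have hexp : (2:ℝ) ≤ Real.exp (c * (X + ‖b‖ ^ 2)) + Real.exp (c * (-X + ‖b‖ ^ 2)) := by
      have h1 : Real.exp (c * X) ≤ Real.exp (c * (X + ‖b‖ ^ 2)) :=
        Real.exp_le_exp.2 (by nlinarith [sq_nonneg (‖b‖)])
      have h2 : Real.exp (c * (-X)) ≤ Real.exp (c * (-X + ‖b‖ ^ 2)) :=
        Real.exp_le_exp.2 (by nlinarith [sq_nonneg (‖b‖)])
      have h3 : (2:ℝ) ≤ Real.exp (c * X) + Real.exp (c * (-X)) := by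
        nlinarith [Real.add_one_le_exp (c * X), Real.add_one_le_exp (c * (-X))]
      have : c * -X = c * (-X) := by ring
      linarith
    have : f z + f (-z) = ENNReal.ofReal (Real.exp (c * (X + ‖b‖ ^ 2)) + Real.exp (c * (-X + ‖b‖ ^ 2))) := by
      rw [hf]
      simp only [hz, hnz]
      rw [ENNReal.ofReal_add (Real.exp_pos _).le (Real.exp_pos _).le]
    rw [this]
    calc (2:ℝ≥0∞) = ENNReal.ofReal (2:ℝ) := by norm_num
      _ ≤ _ := ENNReal.ofReal_le_ofReal hexp
  -- integral of f(-z) equals integral of f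
  have hneg : (∫⁻ z : ℂ, f (-z)) = ∫⁻ z : ℂ, f z :=
    (Measure.measurePreserving_neg (volume : Measure ℂ)).lintegral_comp hmeas
  have htot : (∫⁻ z : ℂ, (f z + f (-z))) = (∫⁻ z : ℂ, f z) + ∫⁻ z : ℂ, f (-z) :=
    lintegral_add_left hmeas _
  have hbig : (⊤ : ℝ≥0∞) ≤ ∫⁻ z : ℂ, (f z + f (-z)) := by
    calc (⊤ : ℝ≥0∞) = ∫⁻ _ : ℂ, (2:ℝ≥0∞) := by
          rw [lintegral_const]
          rw [measure_univ_of_isAddLeftInvariant]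
          simp
      _ ≤ _ := lintegral_mono hpt
  rw [htot, hneg] at hbig
  have : (∫⁻ z : ℂ, f z) = ⊤ := by
    by_contra h
    have hlt : (∫⁻ z : ℂ, f z) < ⊤ := lt_top_iff_ne_top.2 h
    have : (∫⁻ z : ℂ, f z) + (∫⁻ z : ℂ, f z) < ⊤ := ENNReal.add_lt_top.2 ⟨hlt, hlt⟩
    exact absurd (le_antisymm le_top (hbig.trans_eq rfl)) (by
      intro hh
      rw [hh] at this
      exact lt_irrefl _ this)
  rw [hf] at this
  rw [this] at hfin
  exact lt_irrefl _ hfin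
end GaussianCompAux

open GaussianCompAux in
/-- for entire `ψ`, `∫_ℂ e^{(pα/2)(|ψ(z)|²-|z|²)} dm(z) < ∞` iff
`ψ(z) = az + b` with `|a| < 1`. -/
theorem gaussian_comp_integral_finite_iff_affine (α p : ℝ) (hα : 0 < α) (hp : 0 < p)
    (ψ : ℂ → ℂ) (hψ : Differentiable ℂ ψ) :
    (∫⁻ z : ℂ, ENNReal.ofReal
        (Real.exp ((p * α / 2) * (‖ψ z‖ ^ 2 - ‖z‖ ^ 2)))) < ⊤
      ↔ ∃ a b : ℂ, ‖a‖ < 1 ∧ ∀ z : ℂ, ψ z = a * z + b := by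
  have hc : 0 < p * α / 2 := by positivity
  constructor
  · intro hfin
    obtain ⟨C, hC0, hC⟩ := growth _ hc ψ hψ hfin
    obtain ⟨a, b, ha1, hab⟩ := linear_of_growth ψ hψ C hC
    rcases lt_or_eq_of_le ha1 with hlt | heq
    · exact ⟨a, b, hlt, hab⟩
    · exfalso
      apply not_finite_of_abs_one (p * α / 2) hc a b heq
      have heqint : (∫⁻ z : ℂ, ENNReal.ofReal
          (Real.exp ((p * α / 2) * (‖a*z+b‖ ^ 2 - ‖z‖ ^ 2))))
          = ∫⁻ z : ℂ, ENNReal.ofReal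
          (Real.exp ((p * α / 2) * (‖ψ z‖ ^ 2 - ‖z‖ ^ 2))) :=
        lintegral_congr fun z => by rw [hab z]
      rw [heqint]
      exact hfin
  · rintro ⟨a, b, ha, hab⟩
    have h := reverse_dir (p * α / 2) hc a b ha
    have heqint : (∫⁻ z : ℂ, ENNReal.ofReal
        (Real.exp ((p * α / 2) * (‖ψ z‖ ^ 2 - ‖z‖ ^ 2))))
        = ∫⁻ z : ℂ, ENNReal.ofReal
        (Real.exp ((p * α / 2) * (‖a*z+b‖ ^ 2 - ‖z‖ ^ 2))) :=
      lintegral_congr fun z => by rw [hab z]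
    rw [heqint]
    exact h
end

section
/- Let g be entire and 0 < p ≤ ∞. A bounded Volterra operator V_g : F_α^p → F_α^∞ is compact if and only if g(z) = az + b is affine; equivalently, for entire g, |g'(z)|/(1+|z|) → 0 as |z| → ∞ iff g' is constant. -/
open MeasureTheory Complex Filter Topology ENNReal NNReal Bornology Metric

/-- The `F_α^p` norm (finite `p`) as an extended real. -/
noncomputable def fockNormP (α p : ℝ) (f : ℂ → ℂ) : ℝ≥0∞ :=
  (ENNReal.ofReal (α * p / (2 * Real.pi)) *
    ∫⁻ z : ℂ, ENNReal.ofReal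
      (‖f z‖ ^ p * Real.exp (-(α * p / 2) * ‖z‖ ^ 2))) ^ (1 / p)

/-- The `F_α^∞` norm as an extended real. -/
noncomputable def fockNormInf (α : ℝ) (f : ℂ → ℂ) : ℝ≥0∞ :=
  ⨆ z : ℂ, ENNReal.ofReal (‖f z‖ * Real.exp (-(α / 2) * ‖z‖ ^ 2))

/-- The Volterra operator `V_g f(z) = ∫_0^z f(w) g'(w) dw`. -/
noncomputable def volterra (g f : ℂ → ℂ) (z : ℂ) : ℂ :=
  z * ∫ t in (0:ℝ)..1, f ((t : ℂ) * z) * deriv g ((t : ℂ) * z)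

/-- Sequential compactness of `V_g : F_α^p → F_α^∞` for a given source norm `N`. -/
def volterraCompact (α : ℝ) (g : ℂ → ℂ) (N : (ℂ → ℂ) → ℝ≥0∞) : Prop :=
  ∀ f : ℕ → ℂ → ℂ, (∀ j, Differentiable ℂ (f j)) →
    (∃ M : ℝ≥0∞, M < ⊤ ∧ ∀ j, N (f j) ≤ M) →
    (∀ K : Set ℂ, IsCompact K → TendstoUniformlyOn (fun j => f j) 0 Filter.atTop K) →
    Filter.Tendsto (fun j => fockNormInf α (volterra g (f j))) Filter.atTop (nhds 0)

/-- helper: extract pointwise bound from fockNormInf bound -/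
lemma abs_le_of_fockNormInf_le {α : ℝ} {F : ℂ → ℂ} {B : ℝ≥0∞} (hB : B ≠ ⊤)
    (h : fockNormInf α F ≤ B) (z : ℂ) :
    ‖F z‖ ≤ B.toReal * Real.exp ((α/2) * ‖z‖ ^ 2) := by
  have h1 : ENNReal.ofReal (‖F z‖ * Real.exp (-(α / 2) * ‖z‖ ^ 2)) ≤ B := by
    refine le_trans ?_ h
    exact le_iSup (fun z => ENNReal.ofReal
      (‖F z‖ * Real.exp (-(α / 2) * ‖z‖ ^ 2))) z
  have h2 := (ENNReal.ofReal_le_iff_le_toReal hB).1 h1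
  have h3 : (0:ℝ) < Real.exp (-(α / 2) * ‖z‖ ^ 2) := Real.exp_pos _
  have := mul_le_mul_of_nonneg_right h2 (Real.exp_pos ((α/2) * ‖z‖ ^ 2)).le
  calc ‖F z‖
      = ‖F z‖ * Real.exp (-(α / 2) * ‖z‖ ^ 2) *
        Real.exp ((α/2) * ‖z‖ ^ 2) := by
        rw [mul_assoc, ← Real.exp_add]; norm_num
    _ ≤ B.toReal * Real.exp ((α/2) * ‖z‖ ^ 2) := this

/-- the kernel function -/
noncomputable def kern (α : ℝ) (c : ℂ) (w : ℂ) : ℂ :=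
  Complex.exp ((α:ℂ) * ((starRingEnd ℂ) c * w) - ((α * Complex.normSq c / 2 : ℝ) : ℂ))

lemma kern_differentiable (α : ℝ) (c : ℂ) : Differentiable ℂ (kern α c) := by
  unfold kern
  apply Differentiable.cexp
  exact ((differentiable_const _).mul ((differentiable_const _).mul differentiable_id)).sub
    (differentiable_const _)

lemma abs_kern (α : ℝ) (c w : ℂ) :
    ‖kern α c w‖ =
      Real.exp (α * (c.re * w.re + c.im * w.im) - α * Complex.normSq c / 2) := by
  unfold kern
  rw [Complex.norm_exp]
  congr 1
  simp only [Complex.sub_re, Complex.mul_re, Complex.mul_im, Complex.conj_re, Complex.conj_im,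
    Complex.ofReal_re, Complex.ofReal_im]
  ring

lemma kern_weight_eq (α : ℝ) (c w : ℂ) :
    ‖kern α c w‖ * Real.exp (-(α / 2) * ‖w‖ ^ 2) =
      Real.exp (-(α / 2) * ‖w - c‖ ^ 2) := by
  rw [abs_kern, ← Real.exp_add]
  congr 1
  simp only [Complex.sq_norm, Complex.normSq_apply, Complex.sub_re, Complex.sub_im]
  ring

lemma fockNormInf_kern_le (α : ℝ) (hα : 0 < α) (c : ℂ) : fockNormInf α (kern α c) ≤ 1 := by
  refine iSup_le fun w => ?_
  rw [kern_weight_eq]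
  refine ENNReal.ofReal_le_one.2 (Real.exp_le_one_iff.2 ?_)
  have : (0:ℝ) ≤ ‖w - c‖ ^ 2 := by positivity
  nlinarith

lemma kern_weightP_eq (α p : ℝ) (hp : 0 < p) (c w : ℂ) :
    ‖kern α c w‖ ^ p * Real.exp (-(α * p / 2) * ‖w‖ ^ 2) =
      Real.exp (-(α * p / 2) * ‖w - c‖ ^ 2) := by
  rw [abs_kern, ← Real.exp_mul, ← Real.exp_add]
  congr 1
  simp only [Complex.sq_norm, Complex.normSq_apply, Complex.sub_re, Complex.sub_im]
  ring

lemma gauss_lintegral_lt_top {b : ℝ} (hb : 0 < b) :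
    (∫⁻ z : ℂ, ENNReal.ofReal (Real.exp (-b * ‖z‖ ^ 2))) < ⊤ := by
  have hi : Integrable (fun w : ℂ => Real.exp (-b * ‖w‖^2)) := by
    have h := GaussianFourier.integrable_cexp_neg_mul_sq_norm_add (V := ℂ) (b := (b:ℂ))
      (by simpa using hb) 0 0
    simp only [zero_mul, add_zero] at h
    refine h.norm.congr (Filter.Eventually.of_forall fun w => ?_)
    simp [Complex.norm_exp, ← Complex.ofReal_pow]
  simpa [] using hi.lintegral_lt_top

/-- the fockNormP of the kernel is independent of the center, and finite -/
lemma fockNormP_kern (α p : ℝ) (hα : 0 < α) (hp : 0 < p) (c : ℂ) :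
    fockNormP α p (kern α c) =
      (ENNReal.ofReal (α * p / (2 * Real.pi)) *
        ∫⁻ z : ℂ, ENNReal.ofReal (Real.exp (-(α * p / 2) * ‖z‖ ^ 2))) ^ (1/p) := by
  unfold fockNormP
  congr 1
  congr 1
  have : ∀ z : ℂ, ENNReal.ofReal
      (‖kern α c z‖ ^ p * Real.exp (-(α * p / 2) * ‖z‖ ^ 2)) =
      (fun z : ℂ => ENNReal.ofReal (Real.exp (-(α * p / 2) * ‖z‖ ^ 2))) (z + -c) := by
    intro z
    rw [kern_weightP_eq α p hp c z]
    simp only [← sub_eq_add_neg]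
  simp only [this]
  exact lintegral_add_right_eq_self (μ := volume)
    (fun z : ℂ => ENNReal.ofReal (Real.exp (-(α * p / 2) * ‖z‖ ^ 2))) (-c)

lemma fockNormP_kern_lt_top (α p : ℝ) (hα : 0 < α) (hp : 0 < p) (c : ℂ) :
    fockNormP α p (kern α c) ≤
      (ENNReal.ofReal (α * p / (2 * Real.pi)) *
        ∫⁻ z : ℂ, ENNReal.ofReal (Real.exp (-(α * p / 2) * ‖z‖ ^ 2))) ^ (1/p) ∧
      (ENNReal.ofReal (α * p / (2 * Real.pi)) *
        ∫⁻ z : ℂ, ENNReal.ofReal (Real.exp (-(α * p / 2) * ‖z‖ ^ 2))) ^ (1/p) < ⊤ := by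
  refine ⟨le_of_eq (fockNormP_kern α p hα hp c), ?_⟩
  refine ENNReal.rpow_lt_top_of_nonneg (by positivity) ?_
  exact (ENNReal.mul_lt_top ENNReal.ofReal_lt_top
    (gauss_lintegral_lt_top (by positivity))).ne


/-- kernels tend to zero uniformly on compact sets -/
lemma kern_tendstoUniformlyOn (α : ℝ) (hα : 0 < α) (c : ℕ → ℂ) (hc : ∀ j : ℕ, (j:ℝ) ≤ ‖c j‖)
    (K : Set ℂ) (hK : IsCompact K) :
    TendstoUniformlyOn (fun j => kern α (c j)) 0 atTop K := by
  obtain ⟨R, hR0, hRK⟩ : ∃ R, 0 < R ∧ K ⊆ closedBall 0 R := by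
    obtain ⟨R, hR⟩ := hK.isBounded.subset_closedBall 0
    exact ⟨max R 1, by positivity, hR.trans (closedBall_subset_closedBall (le_max_left _ _))⟩
  rw [Metric.tendstoUniformlyOn_iff]
  intro ε hε
  have htend : Tendsto (fun j : ℕ => Real.exp (α * ((j:ℝ) * R - (j:ℝ)^2/2))) atTop (nhds 0) := by
    apply Real.tendsto_exp_atBot.comp
    have h1 : Tendsto (fun j : ℕ => (j:ℝ) * R - (j:ℝ)^2/2) atTop atBot := by
      have h2 : Tendsto (fun j : ℕ => (j:ℝ) * (R - (j:ℝ)/2)) atTop atBot := by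
        refine Tendsto.atTop_mul_atBot₀ tendsto_natCast_atTop_atTop ?_
        simp only [sub_eq_add_neg]
        apply tendsto_atBot_add_const_left
        exact tendsto_neg_atTop_atBot.comp
          (tendsto_natCast_atTop_atTop.atTop_div_const (by norm_num : (0:ℝ) < 2))
      refine h2.congr fun j => by ring
    exact h1.const_mul_atBot hα
  have hev := (htend.eventually (eventually_lt_nhds hε))
  filter_upwards [hev, eventually_ge_atTop ⌈R⌉₊] with j hj hjR w hw
  rw [Pi.zero_apply, dist_zero_left, abs_kern]
  refine lt_of_le_of_lt ?_ hj
  apply Real.exp_le_exp.2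
  have hwR : ‖w‖ ≤ R := by
    simpa [] using mem_closedBall_zero_iff.1 (hRK hw)
  have hcj : (j:ℝ) ≤ ‖c j‖ := by simpa [] using hc j
  have hjR' : R ≤ (j:ℝ) := le_trans (Nat.le_ceil R) (by exact_mod_cast hjR)
  have h0 : (c j).re * w.re + (c j).im * w.im ≤ ‖c j‖ * R := by
    have he : (c j).re * w.re + (c j).im * w.im = ((starRingEnd ℂ) (c j) * w).re := by
      simp only [Complex.mul_re, Complex.conj_re, Complex.conj_im]; ring
    rw [he]
    calc ((starRingEnd ℂ) (c j) * w).re ≤ ‖(starRingEnd ℂ) (c j) * w‖ :=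
          Complex.re_le_norm _
      _ = ‖c j‖ * ‖w‖ := by rw [norm_mul, Complex.norm_conj]
      _ ≤ ‖c j‖ * R :=
          mul_le_mul_of_nonneg_left hwR (norm_nonneg _)
  have hns : Complex.normSq (c j) = ‖c j‖ ^ 2 := (Complex.sq_norm _).symm
  set x := ‖c j‖ with hx
  have hxj : (j:ℝ) ≤ x := hcj
  have key : α * ((c j).re * w.re + (c j).im * w.im) - α * Complex.normSq (c j) / 2 ≤
      α * ((j:ℝ) * R - (j:ℝ)^2/2) := by
    rw [hns]
    have h1 : α * ((c j).re * w.re + (c j).im * w.im) ≤ α * (x * R) :=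
      mul_le_mul_of_nonneg_left h0 hα.le
    nlinarith [mul_nonneg (mul_nonneg hα.le (sub_nonneg.2 hxj)) (sub_nonneg.2 hjR'),
      mul_nonneg (mul_nonneg hα.le (sub_nonneg.2 hxj)) (sub_nonneg.2 (hjR'.trans hxj))]
  exact key

/-- Derivative of `z ↦ z * ∫_0^1 φ(tz) dt` is `φ`. -/
lemma hasDerivAt_scaled_integral {φ : ℂ → ℂ} (hφ : Differentiable ℂ φ) (z₀ : ℂ) :
    HasDerivAt (fun z : ℂ => z * ∫ t in (0:ℝ)..1, φ ((t : ℂ) * z)) (φ z₀) z₀ := by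
  have hφ' : Differentiable ℂ (deriv φ) := by
    have h := ((hφ.differentiableOn.analyticOnNhd isOpen_univ).deriv).differentiableOn
      (f := deriv φ)
    intro z; exact (h z (Set.mem_univ z)).differentiableAt (by simp [isOpen_univ.mem_nhds])
  have hφc : Continuous φ := hφ.continuous
  have hφ'c : Continuous (deriv φ) := hφ'.continuous
  -- bound for deriv φ on the relevant compact set
  obtain ⟨C, hC⟩ : ∃ C, ∀ w ∈ closedBall (0:ℂ) (‖z₀‖ + 1), ‖deriv φ w‖ ≤ C := by
    obtain ⟨C, hC⟩ := (isCompact_closedBall (0:ℂ) (‖z₀‖+1)).exists_bound_of_continuousOn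
      hφ'c.continuousOn
    exact ⟨C, hC⟩
  have key : HasDerivAt (fun z : ℂ => ∫ t in (0:ℝ)..1, φ ((t : ℂ) * z))
      (∫ t in (0:ℝ)..1, deriv φ ((t:ℂ) * z₀) * (t:ℂ)) z₀ := by
    have := intervalIntegral.hasDerivAt_integral_of_dominated_loc_of_deriv_le
      (F := fun (z : ℂ) (t : ℝ) => φ ((t:ℂ) * z))
      (F' := fun (z : ℂ) (t : ℝ) => deriv φ ((t:ℂ) * z) * (t:ℂ))
      (x₀ := z₀) (a := (0:ℝ)) (b := 1) (μ := volume) (bound := fun _ => C)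
      (s := Metric.ball z₀ 1) (Metric.ball_mem_nhds z₀ one_pos)
      (Filter.Eventually.of_forall fun x =>
        ((hφc.comp (by continuity)).aestronglyMeasurable))
      ((hφc.comp (by continuity)).intervalIntegrable 0 1)
      (((hφ'c.comp (by continuity)).mul (by continuity)).aestronglyMeasurable)
      ?_ (intervalIntegrable_const) ?_
    · exact this.2
    · refine Filter.Eventually.of_forall fun t ht x hx => ?_
      rw [norm_mul]
      have ht' : t ∈ Set.Ioc (0:ℝ) 1 := by
        simpa [Set.uIoc_of_le (zero_le_one : (0:ℝ) ≤ 1)] using ht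
      have h1 : ‖(t:ℂ)‖ ≤ 1 := by
        simp [Complex.norm_real, abs_of_pos ht'.1, ht'.2]
      have h2 : ‖deriv φ ((t:ℂ) * x)‖ ≤ C := by
        refine hC _ ?_
        simp only [mem_closedBall, dist_zero_right, norm_mul]
        calc ‖(t:ℂ)‖ * ‖x‖ ≤ 1 * ‖x‖ := by
              exact mul_le_mul_of_nonneg_right h1 (norm_nonneg _)
          _ ≤ ‖z₀‖ + 1 := by
              rw [one_mul]
              have := mem_ball_iff_norm.1 hx
              calc ‖x‖ ≤ ‖z₀‖ + ‖x - z₀‖ := by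
                    simpa using norm_add_le z₀ (x - z₀)
                _ ≤ ‖z₀‖ + 1 := by linarith [(mem_ball_iff_norm.1 hx).le]
      calc ‖deriv φ ((t:ℂ)*x)‖ * ‖(t:ℂ)‖ ≤ C * 1 := by
            refine mul_le_mul h2 h1 (norm_nonneg _) ?_
            exact le_trans (norm_nonneg _) h2
        _ = C := mul_one C
    · refine Filter.Eventually.of_forall fun t ht x hx => ?_
      have : HasDerivAt (fun z : ℂ => (t:ℂ) * z) (t:ℂ) x := by
        simpa using (hasDerivAt_id x).const_mul (t:ℂ)
      exact ((hφ ((t:ℂ)*x)).hasDerivAt).comp x this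
  -- product rule
  have prod := (hasDerivAt_id z₀).mul key
  -- now identify the value
  have FTC : (∫ t in (0:ℝ)..1, (φ ((t:ℂ) * z₀) + (t:ℂ) * (deriv φ ((t:ℂ)*z₀) * z₀)))
      = φ z₀ := by
    have hu : ∀ t ∈ Set.uIcc (0:ℝ) 1, HasDerivAt (fun s : ℝ => (s:ℂ) * φ ((s:ℂ) * z₀))
        (φ ((t:ℂ) * z₀) + (t:ℂ) * (deriv φ ((t:ℂ)*z₀) * z₀)) t := by
      intro t _
      have h1 : HasDerivAt (fun s : ℝ => (s:ℂ)) 1 t := by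
        exact Complex.ofRealCLM.hasDerivAt (x := t)
      have h2 : HasDerivAt (fun w : ℂ => φ (w * z₀)) (deriv φ ((t:ℂ)*z₀) * z₀) (t:ℂ) := by
        have hi : HasDerivAt (fun w : ℂ => w * z₀) z₀ (t:ℂ) := by
          simpa using (hasDerivAt_id ((t:ℂ))).mul_const z₀
        exact ((hφ ((t:ℂ)*z₀)).hasDerivAt).comp (t:ℂ) hi
      have h2' : HasDerivAt (fun s : ℝ => φ ((s:ℂ) * z₀)) (deriv φ ((t:ℂ)*z₀) * z₀) t :=
        h2.comp_ofReal
      have h3 := h1.mul h2'; rw [one_mul] at h3; exact h3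
    have hcont1 : Continuous fun t : ℝ => ((t:ℂ) * z₀) :=
      Complex.continuous_ofReal.mul continuous_const
    have hint : IntervalIntegrable
        (fun t : ℝ => φ ((t:ℂ) * z₀) + (t:ℂ) * (deriv φ ((t:ℂ)*z₀) * z₀)) volume 0 1 :=
      ((hφc.comp hcont1).add (Complex.continuous_ofReal.mul
        ((hφ'c.comp hcont1).mul continuous_const))).intervalIntegrable 0 1
    have := intervalIntegral.integral_eq_sub_of_hasDerivAt hu hint
    simpa using this
  have eq2 : (∫ t in (0:ℝ)..1, φ ((t:ℂ) * z₀)) + z₀ * ∫ t in (0:ℝ)..1,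
      deriv φ ((t:ℂ) * z₀) * (t:ℂ) = φ z₀ := by
    rw [← FTC, ← intervalIntegral.integral_const_mul, ← intervalIntegral.integral_add]
    · congr 1; funext t; ring
    · exact (hφc.comp (Complex.continuous_ofReal.mul continuous_const)).intervalIntegrable 0 1
    · exact (continuous_const.mul (((hφ'c.comp (Complex.continuous_ofReal.mul
        continuous_const))).mul Complex.continuous_ofReal)).intervalIntegrable 0 1
  rw [show φ z₀ = (∫ t in (0:ℝ)..1, φ ((t:ℂ) * z₀)) + z₀ * ∫ t in (0:ℝ)..1,
      deriv φ ((t:ℂ) * z₀) * (t:ℂ) from eq2.symm]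
  simp only [one_mul, id_eq] at prod
  exact prod


lemma deriv_g_differentiable {g : ℂ → ℂ} (hg : Differentiable ℂ g) :
    Differentiable ℂ (deriv g) := by
  have h := ((hg.differentiableOn.analyticOnNhd isOpen_univ).deriv).differentiableOn
    (f := deriv g)
  intro z; exact (h z (Set.mem_univ z)).differentiableAt (by simp [isOpen_univ.mem_nhds])

lemma hasDerivAt_volterra {g f : ℂ → ℂ} (hg : Differentiable ℂ g)
    (hf : Differentiable ℂ f) (z : ℂ) :
    HasDerivAt (volterra g f) (f z * deriv g z) z := by
  have h := hasDerivAt_scaled_integral (φ := fun w => f w * deriv g w)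
    (hf.mul (deriv_g_differentiable hg)) z
  exact h

lemma norm_deriv_le_sphere {F : ℂ → ℂ} (hF : Differentiable ℂ F) {c : ℂ} {r C : ℝ}
    (hr : 0 < r) (h : ∀ w ∈ Metric.sphere c r, ‖F w‖ ≤ C) :
    ‖deriv F c‖ ≤ C / r := by
  have := Complex.norm_deriv_le_of_forall_mem_sphere_norm_le hr hF.diffContOnCl
    (fun w hw => by simpa [] using h w hw)
  simpa [] using this

lemma tendsto_ratio_of_compact {α : ℝ} (hα : 0 < α) {g : ℂ → ℂ} (hg : Differentiable ℂ g)
    {N : (ℂ → ℂ) → ℝ≥0∞} {M : ℝ≥0∞} (hM : M < ⊤) (hN : ∀ c : ℂ, N (kern α c) ≤ M)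
    (hcomp : volterraCompact α g N) :
    Tendsto (fun z : ℂ => ‖deriv g z‖ / (1 + ‖z‖))
      (cobounded ℂ) (nhds 0) := by
  by_contra hcon
  rw [Metric.tendsto_nhds] at hcon
  push_neg at hcon
  obtain ⟨ε, hε, hfreq⟩ := hcon
  have hchoice : ∀ j : ℕ, ∃ z : ℂ, (j:ℝ) ≤ ‖z‖ ∧
      ε ≤ ‖deriv g z‖ / (1 + ‖z‖) := by
    intro j
    have hev : ∀ᶠ z : ℂ in cobounded ℂ, (j:ℝ) ≤ ‖z‖ :=
      tendsto_norm_cobounded_atTop.eventually_ge_atTop _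
    obtain ⟨z, hz1, hz2⟩ := (hfreq.and_eventually hev).exists
    refine ⟨z, hz2, ?_⟩
    rw [Real.dist_eq, sub_zero] at hz1
    have h0 : 0 ≤ ‖deriv g z‖ / (1 + ‖z‖) := by positivity
    rwa [_root_.abs_of_nonneg h0] at hz1
  choose c hc1 hc2 using hchoice
  have htendN := hcomp (fun j => kern α (c j)) (fun j => kern_differentiable α (c j))
    ⟨M, hM, fun j => hN (c j)⟩ (fun K hK => kern_tendstoUniformlyOn α hα c hc1 K hK)
  set δ := ε / (2 * Real.exp (3*α/2)) with hδdef
  have hδpos : 0 < δ := by positivity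
  have hev2 := (ENNReal.tendsto_nhds_zero.1 htendN) (ENNReal.ofReal δ)
    (ENNReal.ofReal_pos.2 hδpos)
  obtain ⟨j, hj⟩ := hev2.exists
  set z := c j with hzdef
  have hz := hc2 j
  have habsz : 0 ≤ ‖z‖ := norm_nonneg z
  have hF : Differentiable ℂ (volterra g (kern α z)) := fun w =>
    (hasDerivAt_volterra hg (kern_differentiable α z) w).differentiableAt
  have hderiv : deriv (volterra g (kern α z)) z = kern α z z * deriv g z :=
    (hasDerivAt_volterra hg (kern_differentiable α z) z).deriv
  set r := 1 / (1 + ‖z‖) with hrdef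
  have hr : 0 < r := by positivity
  have hbound : ∀ w ∈ Metric.sphere z r, ‖volterra g (kern α z) w‖ ≤
      δ * (Real.exp ((α/2) * ‖z‖^2) * Real.exp (3*α/2)) := by
    intro w hw
    have h1 := abs_le_of_fockNormInf_le (ENNReal.ofReal_ne_top) hj w
    rw [ENNReal.toReal_ofReal hδpos.le] at h1
    refine h1.trans ?_
    rw [← Real.exp_add]
    refine mul_le_mul_of_nonneg_left (Real.exp_le_exp.2 ?_) hδpos.le
    have hwz : ‖w - z‖ = r := mem_sphere_iff_norm.1 hw
    have h2 : ‖w‖ ≤ ‖z‖ + r := by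
      calc ‖w‖ = ‖z + (w - z)‖ := by ring_nf
        _ ≤ ‖z‖ + ‖w - z‖ := norm_add_le _ _
        _ = ‖z‖ + r := by rw [hwz]
    have hr1 : r ≤ 1 := by
      rw [hrdef]; rw [div_le_one (by positivity)]; linarith
    have hrz : r * ‖z‖ ≤ 1 := by
      rw [hrdef, div_mul_eq_mul_div, one_mul, div_le_one (by positivity)]; linarith
    have h3 : ‖w‖ ^ 2 ≤ ‖z‖ ^ 2 + 3 := by
      have := sq_nonneg (‖w‖)
      have h4 : ‖w‖ ^ 2 ≤ (‖z‖ + r)^2 := by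
        apply sq_le_sq' <;> nlinarith [norm_nonneg w]
      nlinarith
    nlinarith
  have hcauchy := norm_deriv_le_sphere hF hr hbound
  rw [hderiv] at hcauchy
  have habskern : ‖kern α z z‖ = Real.exp ((α/2) * ‖z‖ ^ 2) := by
    rw [abs_kern]
    congr 1
    have : z.re * z.re + z.im * z.im = Complex.normSq z := by
      simp [Complex.normSq_apply]
    rw [this, ← Complex.sq_norm]
    ring
  rw [norm_mul, habskern] at hcauchy
  rw [hrdef, div_div_eq_mul_div, div_one] at hcauchy
  have hexp : (0:ℝ) < Real.exp ((α/2) * ‖z‖ ^ 2) := Real.exp_pos _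
  have hfin : ‖deriv g z‖ / (1 + ‖z‖) ≤ δ * Real.exp (3*α/2) := by
    rw [div_le_iff₀ (by positivity)]
    nlinarith [norm_nonneg (deriv g z)]
  have hhalf : δ * Real.exp (3*α/2) = ε / 2 := by
    rw [hδdef]; field_simp
  rw [hhalf] at hfin
  linarith [hz.trans hfin]

lemma deriv_const_of_tendsto {g : ℂ → ℂ} (hg : Differentiable ℂ g)
    (h : Tendsto (fun z : ℂ => ‖deriv g z‖ / (1 + ‖z‖))
      (cobounded ℂ) (nhds 0)) :
    ∀ z, deriv g z = deriv g 0 := by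
  have hdiff : Differentiable ℂ (deriv g) := deriv_g_differentiable hg
  have hkey : ∀ z, deriv (deriv g) z = 0 := by
    intro z
    rw [← norm_le_zero_iff]
    refine le_of_forall_gt_imp_ge_of_dense fun ε hε => ?_
    have hev0 := Metric.tendsto_nhds.mp h (ε/2) (by positivity)
    have hev : ∀ᶠ w : ℂ in cobounded ℂ,
        ‖deriv g w‖ / (1 + ‖w‖) < ε/2 := by
      filter_upwards [hev0] with w hw
      rwa [Real.dist_eq, sub_zero, _root_.abs_of_nonneg (by positivity)] at hw
    obtain ⟨R, -, hR⟩ := (Metric.hasBasis_cobounded_compl_closedBall (0:ℂ)).eventually_iff.1 hev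
    set r := max (R + ‖z‖ + 1) (1 + ‖z‖) with hrdef
    have habsz : 0 ≤ ‖z‖ := norm_nonneg z
    have hr : 0 < r := lt_of_lt_of_le (by positivity) (le_max_right _ _)
    have hbound : ∀ w ∈ Metric.sphere z r, ‖deriv g w‖ ≤
        (ε/2) * (1 + ‖z‖ + r) := by
      intro w hw
      have hwz : ‖w - z‖ = r := mem_sphere_iff_norm.1 hw
      have hw1 : ‖w‖ ≤ ‖z‖ + r := by
        calc ‖w‖ = ‖z + (w - z)‖ := by ring_nf
          _ ≤ ‖z‖ + ‖w - z‖ := norm_add_le _ _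
          _ = ‖z‖ + r := by rw [hwz]
      have hw2 : R < ‖w‖ := by
        have htri : ‖w - z‖ ≤ ‖w‖ + ‖z‖ := by
          simpa [sub_eq_add_neg] using norm_add_le w (-z)
        have hrR : R + ‖z‖ + 1 ≤ r := le_max_left _ _
        rw [hwz] at htri
        linarith
      have hmem : w ∈ (Metric.closedBall (0:ℂ) R)ᶜ := by
        simp only [Set.mem_compl_iff, Metric.mem_closedBall, dist_zero_right, not_le]
        exact hw2
      have := hR hmem
      rw [div_lt_iff₀ (by positivity)] at this
      have habsw : 0 ≤ ‖w‖ := norm_nonneg w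
      nlinarith
    have hc := norm_deriv_le_sphere hdiff hr hbound
    have hr2 : 1 + ‖z‖ ≤ r := le_max_right _ _
    refine hc.trans ?_
    rw [div_le_iff₀ hr]
    nlinarith
  intro z
  exact is_const_of_deriv_eq_zero hdiff hkey z 0

lemma affine_of_deriv_const {g : ℂ → ℂ} (hg : Differentiable ℂ g) {c : ℂ}
    (h : ∀ z, deriv g z = c) : ∀ z, g z = c * z + g 0 := by
  intro z
  have hu : Differentiable ℂ (fun z : ℂ => g z - c * z) :=
    hg.sub (differentiable_id.const_mul c)
  have hd : ∀ w, deriv (fun z : ℂ => g z - c * z) w = 0 := by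
    intro w
    have h2 : deriv (fun z : ℂ => c*z) w = c := by
      simpa using ((hasDerivAt_id w).const_mul c).deriv
    rw [deriv_fun_sub (hg w) (by fun_prop : DifferentiableAt ℂ (fun z : ℂ => c * z) w), h2, h w, sub_self]
  have := is_const_of_deriv_eq_zero hu hd z 0
  simp only [mul_zero, sub_zero] at this
  linear_combination this

lemma deriv_affine (a b : ℂ) (w : ℂ) : deriv (fun z : ℂ => a * z + b) w = a := by
  simpa using (((hasDerivAt_id w).const_mul a).add_const b).deriv

lemma tendsto_volterra_affine {α : ℝ} (hα : 0 < α) (a b : ℂ) {g : ℂ → ℂ}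
    (hgab : ∀ z, g z = a * z + b)
    {f : ℕ → ℂ → ℂ} (hfd : ∀ j, Differentiable ℂ (f j)) {K : ℝ} (hK : 0 ≤ K)
    (hpt : ∀ j w, ‖f j w‖ ≤ K * Real.exp ((α/2) * ‖w‖ ^ 2))
    (hloc : ∀ S : Set ℂ, IsCompact S → TendstoUniformlyOn (fun j => f j) 0 atTop S) :
    Tendsto (fun j => fockNormInf α (volterra g (f j))) atTop (nhds 0) := by
  have hderg : ∀ w : ℂ, deriv g w = a := by
    have hfun : g = fun z => a * z + b := funext hgab
    intro w; rw [hfun]; exact deriv_affine a b w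
  set A := ‖a‖ with hA
  have hA0 : 0 ≤ A := norm_nonneg a
  rw [ENNReal.tendsto_nhds_zero]
  intro ε hε
  obtain ⟨δ, -, hδ1, hδ2⟩ := ENNReal.lt_iff_exists_real_btwn.1 hε
  have hδ0 : 0 < δ := ENNReal.ofReal_pos.1 hδ1
  refine Filter.Eventually.mono ?_ (fun j (hj : _ ≤ ENNReal.ofReal δ) => hj.trans hδ2.le)
  set R := max 1 ((2*K*(A+1)+1)/(α*δ)) with hRdef
  have hR1 : (1:ℝ) ≤ R := le_max_left _ _
  have hR0 : (0:ℝ) < R := lt_of_lt_of_le one_pos hR1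
  set δ₂ := δ/(R*(A+1)+1) with hδ₂def
  have hδ₂0 : 0 < δ₂ := by positivity
  have hunif := Metric.tendstoUniformlyOn_iff.1
    (hloc (Metric.closedBall 0 R) (isCompact_closedBall _ _)) δ₂ hδ₂0
  filter_upwards [hunif] with j hj
  refine iSup_le fun z => ENNReal.ofReal_le_ofReal ?_
  have habsz : 0 ≤ ‖z‖ := norm_nonneg z
  -- rewrite the volterra integral
  have hV : volterra g (f j) z = z * ∫ t in (0:ℝ)..1, f j ((t:ℂ)*z) * a := by
    unfold volterra
    congr 1
    refine intervalIntegral.integral_congr fun t _ => ?_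
    rw [hderg]
  have hcont : Continuous fun t : ℝ => f j ((t:ℂ)*z) * a :=
    (((hfd j).continuous.comp (Complex.continuous_ofReal.mul continuous_const)).mul
      continuous_const)
  have hnorm : ‖volterra g (f j) z‖ ≤
      ‖z‖ * ∫ t in (0:ℝ)..1, ‖f j ((t:ℂ)*z)‖ * A := by
    rw [hV, norm_mul]
    refine mul_le_mul_of_nonneg_left ?_ habsz
    refine le_trans (intervalIntegral.norm_integral_le_integral_norm zero_le_one) ?_
    refine le_of_eq (intervalIntegral.integral_congr fun t _ => ?_)
    simp [norm_mul, hA]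
  have hexple : Real.exp (-(α / 2) * ‖z‖ ^ 2) ≤ 1 :=
    Real.exp_le_one_iff.2 (by nlinarith)
  rcases le_or_gt (‖z‖) R with hzR | hzR
  · -- small z
    have hIb : (∫ t in (0:ℝ)..1, ‖f j ((t:ℂ)*z)‖ * A) ≤ δ₂ * A := by
      have hmono := intervalIntegral.integral_mono_on (μ := MeasureTheory.volume) (a := (0:ℝ)) (b := 1)
        (f := fun t => ‖f j ((t:ℂ)*z)‖ * A) (g := fun _ => δ₂ * A) zero_le_one
        (((continuous_norm.comp ((hfd j).continuous.comp
          (Complex.continuous_ofReal.mul continuous_const))).mul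
          continuous_const).intervalIntegrable 0 1)
        (intervalIntegrable_const) ?_
      · simpa using hmono
      · intro t ht
        refine mul_le_mul_of_nonneg_right ?_ hA0
        have hmem : (t:ℂ)*z ∈ Metric.closedBall (0:ℂ) R := by
          simp only [Metric.mem_closedBall, dist_zero_right, norm_mul]
          have : ‖(t:ℂ)‖ = t := by
            rw [Complex.norm_of_nonneg ht.1]
          rw [this]
          calc t * ‖z‖ ≤ 1 * R := by
                apply mul_le_mul ht.2 hzR habsz zero_le_one
            _ = R := one_mul R
        have := hj ((t:ℂ)*z) hmem
        rw [Pi.zero_apply, dist_zero_left] at this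
        exact this.le
    calc ‖volterra g (f j) z‖ * Real.exp (-(α / 2) * ‖z‖ ^ 2)
        ≤ (‖z‖ * (δ₂ * A)) * 1 := by
          apply mul_le_mul _ hexple (Real.exp_pos _).le (by positivity)
          exact le_trans hnorm (mul_le_mul_of_nonneg_left hIb habsz)
      _ = ‖z‖ * δ₂ * A := by ring
      _ ≤ R * δ₂ * A :=
          mul_le_mul_of_nonneg_right (mul_le_mul_of_nonneg_right hzR hδ₂0.le) hA0
      _ ≤ δ := by
          rw [hδ₂def]
          have heq : R * (δ/(R*(A+1)+1)) * A = δ*(R*A)/(R*(A+1)+1) := by ring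
          rw [heq, div_le_iff₀ (by positivity)]
          nlinarith
  · -- large z
    set s := (α/2) * ‖z‖ ^ 2 with hsdef
    have hs : 0 < s := by
      have : (1:ℝ) ≤ ‖z‖ := hR1.trans hzR.le
      have h2 : (1:ℝ) ≤ ‖z‖ ^ 2 := by nlinarith
      positivity
    have hIexp : ∫ t in (0:ℝ)..1, Real.exp (s*t) = (Real.exp s - 1)/s := by
      have hder : ∀ t ∈ Set.uIcc (0:ℝ) 1,
          HasDerivAt (fun u => Real.exp (s*u)/s) (Real.exp (s*t)) t := by
        intro t _
        have h1 : HasDerivAt (fun u : ℝ => s*u) s t := by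
          simpa using (hasDerivAt_id t).const_mul s
        have h2 := (Real.hasDerivAt_exp (s*t)).comp t h1
        have h3 := h2.div_const s
        have : Real.exp (s*t) * s / s = Real.exp (s*t) := by
          field_simp
        rwa [this] at h3
      rw [intervalIntegral.integral_eq_sub_of_hasDerivAt hder
        ((Real.continuous_exp.comp (continuous_const.mul continuous_id)).intervalIntegrable 0 1)]
      simp
      ring
    have hIb : (∫ t in (0:ℝ)..1, ‖f j ((t:ℂ)*z)‖ * A) ≤ K * A * (Real.exp s / s) := by
      have hmono := intervalIntegral.integral_mono_on (μ := MeasureTheory.volume) (a := (0:ℝ)) (b := 1)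
        (f := fun t => ‖f j ((t:ℂ)*z)‖ * A)
        (g := fun t => (K * A) * Real.exp (s*t)) zero_le_one
        (((continuous_norm.comp ((hfd j).continuous.comp
          (Complex.continuous_ofReal.mul continuous_const))).mul
          continuous_const).intervalIntegrable 0 1)
        ((continuous_const.mul (Real.continuous_exp.comp
          (continuous_const.mul continuous_id))).intervalIntegrable 0 1) ?_
      · rw [intervalIntegral.integral_const_mul, hIexp] at hmono
        refine hmono.trans ?_
        have h1 : (Real.exp s - 1)/s ≤ Real.exp s / s := by
          gcongr
          exact sub_le_self _ zero_le_one
        exact mul_le_mul_of_nonneg_left h1 (by positivity)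
      · intro t ht
        have habt : ‖(t:ℂ)*z‖ = t * ‖z‖ := by
          rw [norm_mul, Complex.norm_of_nonneg ht.1]
        have h1 : ‖f j ((t:ℂ)*z)‖ ≤ K * Real.exp (s*t) := by
          refine (hpt j _).trans ?_
          refine mul_le_mul_of_nonneg_left (Real.exp_le_exp.2 ?_) hK
          rw [habt, hsdef]
          have ht2 : t^2 ≤ t := by nlinarith [ht.1, ht.2]
          have : (t * ‖z‖)^2 = t^2 * ‖z‖ ^2 := by ring
          rw [this]
          nlinarith [sq_nonneg (‖z‖)]
        calc ‖f j ((t:ℂ)*z)‖ * A ≤ (K * Real.exp (s*t)) * A :=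
              mul_le_mul_of_nonneg_right h1 hA0
          _ = K * A * Real.exp (s*t) := by ring
    have hfinal : ‖volterra g (f j) z‖ * Real.exp (-(α / 2) * ‖z‖ ^ 2)
        ≤ 2*K*A/(α*‖z‖) := by
      have h1 : ‖volterra g (f j) z‖ ≤ ‖z‖ * (K * A * (Real.exp s / s)) :=
        hnorm.trans (mul_le_mul_of_nonneg_left hIb habsz)
      have h2 : Real.exp (-(α / 2) * ‖z‖ ^ 2) = (Real.exp s)⁻¹ := by
        rw [← Real.exp_neg]; congr 1; rw [hsdef]; ring
      rw [h2]
      have hez : (0:ℝ) < Real.exp s := Real.exp_pos s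
      have h3 : ‖z‖ * (K * A * (Real.exp s / s)) * (Real.exp s)⁻¹
          = ‖z‖ * K * A / s := by
        field_simp
      calc ‖volterra g (f j) z‖ * (Real.exp s)⁻¹
          ≤ ‖z‖ * (K * A * (Real.exp s / s)) * (Real.exp s)⁻¹ := by
            apply mul_le_mul_of_nonneg_right h1 (by positivity)
        _ = ‖z‖ * K * A / s := h3
        _ = 2*K*A/(α*‖z‖) := by
            rw [hsdef]
            have hz0 : ‖z‖ ≠ 0 := (lt_of_lt_of_le hR0 hzR.le).ne'
            field_simp
    refine hfinal.trans ?_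
    have hzpos : (0:ℝ) < ‖z‖ := lt_of_lt_of_le hR0 hzR.le
    rw [div_le_iff₀ (mul_pos hα hzpos)]
    have hR2 : (2*K*(A+1)+1)/(α*δ) ≤ R := le_max_right _ _
    rw [div_le_iff₀ (mul_pos hα hδ0)] at hR2
    nlinarith [mul_lt_mul_of_pos_left hzR (mul_pos hα hδ0)]

noncomputable def weyl (α : ℝ) (w : ℂ) (f : ℂ → ℂ) : ℂ → ℂ :=
  fun u => f (u + w) *
    Complex.exp (-(α:ℂ) * ((starRingEnd ℂ) w * u) - ((α * Complex.normSq w / 2 : ℝ) : ℂ))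

lemma weyl_differentiable (α : ℝ) (w : ℂ) {f : ℂ → ℂ} (hf : Differentiable ℂ f) :
    Differentiable ℂ (weyl α w f) := by
  unfold weyl
  exact (hf.comp (differentiable_id.add_const w)).mul
    ((((differentiable_const _).mul ((differentiable_const _).mul differentiable_id)).sub
      (differentiable_const _)).cexp)

lemma abs_weyl (α : ℝ) (w : ℂ) (f : ℂ → ℂ) (u : ℂ) :
    ‖weyl α w f u‖ = ‖f (u + w)‖ *
      Real.exp (-(α * (w.re * u.re + w.im * u.im)) - α * Complex.normSq w / 2) := by
  unfold weyl
  rw [norm_mul, Complex.norm_exp]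
  congr 2
  simp only [Complex.sub_re, Complex.mul_re, Complex.mul_im, Complex.neg_re, Complex.neg_im,
    Complex.conj_re, Complex.conj_im, Complex.ofReal_re, Complex.ofReal_im]
  ring

lemma weyl_weightP (α p : ℝ) (hp : 0 < p) (w : ℂ) (f : ℂ → ℂ) (u : ℂ) :
    ‖weyl α w f u‖ ^ p * Real.exp (-(α * p / 2) * ‖u‖ ^ 2) =
      ‖f (u + w)‖ ^ p * Real.exp (-(α * p / 2) * ‖u + w‖ ^ 2) := by
  rw [abs_weyl, Real.mul_rpow (norm_nonneg _) (Real.exp_pos _).le, ← Real.exp_mul,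
    mul_assoc, ← Real.exp_add]
  congr 2
  simp only [Complex.sq_norm, Complex.normSq_apply, Complex.add_re, Complex.add_im]
  ring

lemma fockNormP_weyl (α p : ℝ) (hp : 0 < p) (w : ℂ) (f : ℂ → ℂ) :
    fockNormP α p (weyl α w f) = fockNormP α p f := by
  unfold fockNormP
  congr 2
  have : ∀ u : ℂ, ENNReal.ofReal
      (‖weyl α w f u‖ ^ p * Real.exp (-(α * p / 2) * ‖u‖ ^ 2)) =
      (fun u : ℂ => ENNReal.ofReal
        (‖f u‖ ^ p * Real.exp (-(α * p / 2) * ‖u‖ ^ 2))) (u + w) := by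
    intro u
    rw [weyl_weightP α p hp w f u]
  simp only [this]
  exact lintegral_add_right_eq_self (μ := volume)
    (fun u : ℂ => ENNReal.ofReal
      (‖f u‖ ^ p * Real.exp (-(α * p / 2) * ‖u‖ ^ 2))) w

lemma abs_weyl_zero (α : ℝ) (w : ℂ) (f : ℂ → ℂ) :
    ‖weyl α w f 0‖ =
      ‖f w‖ * Real.exp (-(α/2) * ‖w‖ ^ 2) := by
  rw [abs_weyl]
  simp only [Complex.zero_re, Complex.zero_im, zero_add, mul_zero, neg_zero, zero_sub]
  congr 2
  rw [Complex.sq_norm]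
  ring

lemma pointwise_bound_of_opbound {α p : ℝ} (hα : 0 < α) (hp : 0 < p) {g : ℂ → ℂ}
    (hg : Differentiable ℂ g) {a : ℂ} (hderg : ∀ u : ℂ, deriv g u = a) (ha : a ≠ 0)
    {C : ℝ≥0∞} (hC : C ≠ ⊤)
    (hH : ∀ f : ℂ → ℂ, Differentiable ℂ f →
      fockNormInf α (volterra g f) ≤ C * fockNormP α p f)
    {f : ℂ → ℂ} (hf : Differentiable ℂ f) {M : ℝ≥0∞} (hM : M ≠ ⊤)
    (hfM : fockNormP α p f ≤ M) (w : ℂ) :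
    ‖f w‖ ≤ ((C*M).toReal * Real.exp (α/2) / ‖a‖)
      * Real.exp ((α/2) * ‖w‖ ^ 2) := by
  set h := weyl α w f with hh
  have hhd : Differentiable ℂ h := weyl_differentiable α w hf
  have hnormh : fockNormP α p h ≤ M := by rw [hh, fockNormP_weyl α p hp]; exact hfM
  have hBne : C * M ≠ ⊤ := ENNReal.mul_ne_top hC hM
  have hinf : fockNormInf α (volterra g h) ≤ C * M :=
    (hH h hhd).trans (mul_le_mul_right hnormh C)
  have hpt : ∀ u : ℂ, ‖volterra g h u‖ ≤
      (C*M).toReal * Real.exp ((α/2) * ‖u‖ ^ 2) :=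
    abs_le_of_fockNormInf_le hBne hinf
  have hVd : Differentiable ℂ (volterra g h) := fun u =>
    (hasDerivAt_volterra hg hhd u).differentiableAt
  have hderiv0 : deriv (volterra g h) 0 = h 0 * deriv g 0 :=
    (hasDerivAt_volterra hg hhd 0).deriv
  have hsphere : ∀ u ∈ Metric.sphere (0:ℂ) 1, ‖volterra g h u‖ ≤
      (C*M).toReal * Real.exp (α/2) := by
    intro u hu
    have habs : ‖u‖ = 1 := by
      simpa [] using mem_sphere_zero_iff_norm.1 hu
    have := hpt u
    rwa [habs, one_pow, mul_one] at this
  have hcauchy := norm_deriv_le_sphere hVd one_pos hsphere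
  rw [div_one, hderiv0, norm_mul] at hcauchy
  have hBtR : 0 ≤ (C*M).toReal := ENNReal.toReal_nonneg
  have hawz : ‖h 0‖ = ‖f w‖ * Real.exp (-(α/2) * ‖w‖ ^ 2) :=
    abs_weyl_zero α w f
  rw [hawz] at hcauchy
  have ha0 : 0 < ‖a‖ := by
    simpa [norm_pos_iff] using ha
  rw [hderg 0] at hcauchy
  have h2 := mul_le_mul_of_nonneg_right hcauchy
    (Real.exp_pos ((α/2) * ‖w‖ ^ 2)).le
  have hE : Real.exp (-(α/2) * ‖w‖ ^ 2) * Real.exp ((α/2) * ‖w‖ ^ 2) = 1 := by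
    rw [← Real.exp_add]; norm_num
  have hLHS : ‖f w‖ * Real.exp (-(α/2) * ‖w‖ ^ 2) * ‖a‖ *
      Real.exp ((α/2) * ‖w‖ ^ 2) = ‖f w‖ * ‖a‖ := by
    calc ‖f w‖ * Real.exp (-(α/2) * ‖w‖ ^ 2) * ‖a‖ *
        Real.exp ((α/2) * ‖w‖ ^ 2)
        = ‖f w‖ * ‖a‖ * (Real.exp (-(α/2) * ‖w‖ ^ 2) *
          Real.exp ((α/2) * ‖w‖ ^ 2)) := by ring
      _ = ‖f w‖ * ‖a‖ := by rw [hE, mul_one]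
  rw [hLHS] at h2
  rw [div_mul_eq_mul_div, le_div_iff₀ ha0]
  calc ‖f w‖ * ‖a‖
      ≤ (C*M).toReal * Real.exp (α/2) * Real.exp ((α/2) * ‖w‖ ^ 2) := h2
    _ = (C*M).toReal * Real.exp (α/2) * Real.exp ((α/2) * ‖w‖ ^ 2) := rfl

/-- a bounded `V_g : F_α^p → F_α^∞` (`0 < p ≤ ∞`) is compact iff
`g(z) = az + b`; equivalently, for entire `g`, `|g'(z)|/(1+|z|) → 0` as `|z| → ∞` iff
`g'` is constant. -/
theorem volterra_compact_iff_affine (α : ℝ) (hα : 0 < α)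
    (g : ℂ → ℂ) (hg : Differentiable ℂ g) :
    (∀ p : ℝ, 0 < p →
      (∃ C : ℝ≥0∞, C < ⊤ ∧ ∀ f : ℂ → ℂ, Differentiable ℂ f →
          fockNormInf α (volterra g f) ≤ C * fockNormP α p f) →
      (volterraCompact α g (fockNormP α p) ↔ ∃ a b : ℂ, ∀ z : ℂ, g z = a * z + b)) ∧
    ((∃ C : ℝ≥0∞, C < ⊤ ∧ ∀ f : ℂ → ℂ, Differentiable ℂ f →
          fockNormInf α (volterra g f) ≤ C * fockNormInf α f) →
      (volterraCompact α g (fockNormInf α) ↔ ∃ a b : ℂ, ∀ z : ℂ, g z = a * z + b)) ∧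
    (Filter.Tendsto (fun z : ℂ => ‖deriv g z‖ / (1 + ‖z‖))
        (cobounded ℂ) (nhds 0)
      ↔ ∃ c : ℂ, ∀ z : ℂ, deriv g z = c) := by
  have forward : ∀ (N : (ℂ → ℂ) → ℝ≥0∞) (M : ℝ≥0∞), M < ⊤ → (∀ c : ℂ, N (kern α c) ≤ M) →
      volterraCompact α g N → ∃ a b : ℂ, ∀ z : ℂ, g z = a * z + b := by
    intro N M hM hN hcomp
    have ht := tendsto_ratio_of_compact hα hg hM hN hcomp
    have hconst := deriv_const_of_tendsto hg ht
    exact ⟨deriv g 0, g 0, affine_of_deriv_const hg hconst⟩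
  refine ⟨?_, ?_, ?_⟩
  · intro p hp hH
    constructor
    · intro hcomp
      exact forward (fockNormP α p) _ (fockNormP_kern_lt_top α p hα hp 0).2
        (fun c => (fockNormP_kern_lt_top α p hα hp c).1) hcomp
    · rintro ⟨a, b, hab⟩
      have hderg : ∀ w : ℂ, deriv g w = a := by
        have hfun : g = fun z => a * z + b := funext hab
        intro w; rw [hfun]; exact deriv_affine a b w
      intro f hfd hbound hloc
      obtain ⟨M, hM, hfM⟩ := hbound
      by_cases ha : a = 0
      · have hzero : ∀ j, fockNormInf α (volterra g (f j)) = 0 := by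
          intro j
          have hv : ∀ z, volterra g (f j) z = 0 := by
            intro z
            unfold volterra
            have hint : ∀ t : ℝ, f j ((t:ℂ)*z) * deriv g ((t:ℂ)*z) = 0 := fun t => by
              rw [hderg, ha, mul_zero]
            simp [hint]
          simp [fockNormInf, hv]
        have : (fun j => fockNormInf α (volterra g (f j))) = fun _ => (0:ℝ≥0∞) :=
          funext hzero
        rw [this]
        exact tendsto_const_nhds
      · obtain ⟨C, hC, hHb⟩ := hH
        set Kc := (C*M).toReal * Real.exp (α/2) / ‖a‖ with hKc
        have ha0 : 0 < ‖a‖ := by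
          simpa [norm_pos_iff] using ha
        have hKc0 : 0 ≤ Kc := by positivity
        refine tendsto_volterra_affine hα a b hab hfd hKc0 ?_ hloc
        intro j w
        exact pointwise_bound_of_opbound hα hp hg hderg ha hC.ne hHb (hfd j) hM.ne (hfM j) w
  · intro _hH
    constructor
    · intro hcomp
      exact forward (fockNormInf α) 1 ENNReal.one_lt_top
        (fun c => fockNormInf_kern_le α hα c) hcomp
    · rintro ⟨a, b, hab⟩
      intro f hfd hbound hloc
      obtain ⟨M, hM, hfM⟩ := hbound
      refine tendsto_volterra_affine hα a b hab hfd (ENNReal.toReal_nonneg (a := M)) ?_ hloc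
      intro j w
      exact abs_le_of_fockNormInf_le hM.ne (hfM j) w
  · constructor
    · intro htend
      exact ⟨deriv g 0, deriv_const_of_tendsto hg htend⟩
    · rintro ⟨c, hc⟩
      simp only [hc]
      have h1 : Tendsto (fun z : ℂ => 1 + ‖z‖) (cobounded ℂ) atTop := by
        have h2 := tendsto_norm_cobounded_atTop (E := ℂ)
        have h3 : Tendsto (fun z : ℂ => ‖z‖) (cobounded ℂ) atTop := by
          simpa [] using h2
        exact tendsto_atTop_add_const_left _ 1 h3
      exact Tendsto.div_atTop tendsto_const_nhds h1
end

section
/- Let ψ, g be entire and suppose V_{g,ψ} : F_α^p → F_α^∞ is bounded for some 0 < p ≤ ∞. Then sup_{z∈ℂ} (|g'(z)|/(1+|z|)) e^{(α/2)(|ψ(z)|²-|z|²)} ≤ C ‖V_{g,ψ}‖ for a constant C depending only on α and p; the bound is obtained by testing V_{g,ψ} on the normalized kernels k_{w,α}(z) = e^{α⟨z,w⟩-(α/2)|w|²} with w = ψ(z), which satisfy ‖k_{w,α}‖_{p,α} ≲ 1. -/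
open MeasureTheory Complex Filter Topology ENNReal NNReal

/-- The operator `V_{g,ψ} f(z) = ∫_0^z f(ψ(w)) g'(w) dw`. -/
noncomputable def volterraComp (g ψ f : ℂ → ℂ) (z : ℂ) : ℂ :=
  z * ∫ t in (0:ℝ)..1, f (ψ ((t : ℂ) * z)) * deriv g ((t : ℂ) * z)

noncomputable def fockKer (α : ℝ) (w u : ℂ) : ℂ :=
  Complex.exp ((α : ℂ) * (u * (starRingEnd ℂ) w) - ((α/2 : ℝ) : ℂ) * ((‖w‖ ^ 2 : ℝ) : ℂ))

lemma fockKer_diff (α : ℝ) (w : ℂ) : Differentiable ℂ (fockKer α w) := by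
  unfold fockKer
  apply Differentiable.cexp
  exact ((differentiable_id.mul_const _).const_mul _).sub_const _

lemma fockKer_weight (α : ℝ) (w u : ℂ) :
    ‖fockKer α w u‖ * Real.exp (-(α/2) * ‖u‖ ^ 2) =
      Real.exp (-(α/2) * ‖u - w‖ ^ 2) := by
  rw [fockKer, Complex.norm_exp, ← Real.exp_add]
  congr 1
  have hre : ((α : ℂ) * (u * (starRingEnd ℂ) w) - ((α/2 : ℝ) : ℂ) * ((‖w‖ ^ 2 : ℝ) : ℂ)).re
      = α * (u * (starRingEnd ℂ) w).re - α/2 * ‖w‖ ^ 2 := by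
    simp [Complex.sub_re, Complex.mul_re, ← Complex.ofReal_pow]
  rw [hre, Complex.sq_norm, Complex.sq_norm, Complex.sq_norm, Complex.normSq_sub]
  ring

lemma fockKer_self (α : ℝ) (w : ℂ) :
    ‖fockKer α w w‖ = Real.exp ((α/2) * ‖w‖ ^ 2) := by
  have h := fockKer_weight α w w
  simp only [sub_self, norm_zero] at h
  rw [show (0:ℝ)^2 = 0 by norm_num, mul_zero, Real.exp_zero] at h
  have he : Real.exp (-(α/2) * ‖w‖ ^ 2) = (Real.exp ((α/2) * ‖w‖ ^ 2))⁻¹ := by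
    rw [← Real.exp_neg]; ring_nf
  rw [he, mul_inv_eq_one₀ (Real.exp_ne_zero _)] at h
  exact h
lemma fockKer_normP (α p : ℝ) (hα : 0 < α) (hp : 0 < p) (w : ℂ) :
    fockNormP α p (fockKer α w) = 1 := by
  have hb : 0 < α * p / 2 := by positivity
  have hpt : ∀ u : ℂ, ‖fockKer α w u‖ ^ p * Real.exp (-(α * p / 2) * ‖u‖ ^ 2)
      = Real.exp (-(α * p / 2) * ‖u - w‖ ^ 2) := by
    intro u
    have h1 : Real.exp (-(α * p / 2) * ‖u‖ ^ 2)
        = Real.exp (-(α/2) * ‖u‖ ^ 2) ^ p := by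
      rw [← Real.exp_mul]; ring_nf
    have h2 : Real.exp (-(α * p / 2) * ‖u - w‖ ^ 2)
        = Real.exp (-(α/2) * ‖u - w‖ ^ 2) ^ p := by
      rw [← Real.exp_mul]; ring_nf
    rw [h1, h2, ← Real.mul_rpow (norm_nonneg _) (Real.exp_nonneg _), fockKer_weight]
  have hlim : (∫⁻ u : ℂ, ENNReal.ofReal
      (‖fockKer α w u‖ ^ p * Real.exp (-(α * p / 2) * ‖u‖ ^ 2)))
      = ENNReal.ofReal (Real.pi / (α * p / 2)) := by
    simp_rw [hpt]
    have htrans : (∫⁻ u : ℂ, ENNReal.ofReal (Real.exp (-(α * p / 2) * ‖u - w‖ ^ 2)))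
        = ∫⁻ u : ℂ, ENNReal.ofReal (Real.exp (-(α * p / 2) * ‖u‖ ^ 2)) := by
      have := lintegral_add_right_eq_self (μ := volume)
        (fun u : ℂ => ENNReal.ofReal (Real.exp (-(α * p / 2) * ‖u‖ ^ 2))) (-w)
      simp only [← sub_eq_add_neg] at this
      exact this
    rw [htrans]
    have hint : Integrable (fun u : ℂ => Real.exp (-(α * p / 2) * ‖u‖ ^ 2)) := by
      have := (GaussianFourier.integrable_cexp_neg_mul_sq_norm_add (V := ℂ)
        (b := ((α * p / 2 : ℝ) : ℂ)) (by simpa using hb) 0 0).norm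
      simpa [Complex.norm_exp, ← Complex.ofReal_pow] using this
    rw [show (fun u : ℂ => ENNReal.ofReal (Real.exp (-(α * p / 2) * ‖u‖ ^ 2)))
        = fun u : ℂ => ENNReal.ofReal (Real.exp (-(α * p / 2) * ‖u‖ ^ 2)) by
      funext u; rfl]
    rw [← ofReal_integral_eq_lintegral_ofReal hint (Filter.Eventually.of_forall fun u => Real.exp_nonneg _)]
    rw [GaussianFourier.integral_rexp_neg_mul_sq_norm hb]
    norm_num [Complex.finrank_real_complex]
  unfold fockNormP
  rw [hlim, ← ENNReal.ofReal_mul (by positivity)]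
  have : α * p / (2 * Real.pi) * (Real.pi / (α * p / 2)) = 1 := by
    field_simp
  rw [this, ENNReal.ofReal_one, ENNReal.one_rpow]

lemma fockKer_normInf (α : ℝ) (hα : 0 < α) (w : ℂ) : fockNormInf α (fockKer α w) ≤ 1 := by
  apply iSup_le
  intro u
  rw [fockKer_weight]
  refine le_trans (ENNReal.ofReal_le_ofReal ?_) (le_of_eq ENNReal.ofReal_one)
  rw [Real.exp_le_one_iff]
  have : (0:ℝ) ≤ (α/2) * ‖u - w‖ ^ 2 := by positivity
  nlinarith
lemma differentiable_deriv_of_entire {h : ℂ → ℂ} (hh : Differentiable ℂ h) :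
    Differentiable ℂ (deriv h) :=
  analyticOnNhd_univ_iff_differentiable.1 (analyticOnNhd_univ_iff_differentiable.2 hh).deriv

lemma hasDerivAt_volterra_primitive {h : ℂ → ℂ} (hh : Differentiable ℂ h) (z₀ : ℂ) :
    HasDerivAt (fun z : ℂ => z * ∫ t in (0:ℝ)..1, h ((t : ℂ) * z)) (h z₀) z₀ := by
  have hh' : Differentiable ℂ (deriv h) := differentiable_deriv_of_entire hh
  have hc : Continuous h := hh.continuous
  have hc' : Continuous (deriv h) := hh'.continuous
  set r : ℝ := ‖z₀‖ + 1 with hr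
  have hr0 : 0 < r := by positivity
  obtain ⟨M₁, hM₁⟩ := (isCompact_closedBall (0:ℂ) r).exists_bound_of_continuousOn
    hc.continuousOn
  obtain ⟨M₂, hM₂⟩ := (isCompact_closedBall (0:ℂ) r).exists_bound_of_continuousOn
    hc'.continuousOn
  have hM₂0 : 0 ≤ M₂ := le_trans (norm_nonneg _) (hM₂ 0 (Metric.mem_closedBall_self hr0.le))
  -- continuity facts
  have hFcont : ∀ x : ℂ, Continuous fun t : ℝ => x * h ((t:ℂ) * x) := fun x =>
    continuous_const.mul (hc.comp ((Complex.continuous_ofReal).mul continuous_const))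
  have hF'cont : ∀ x : ℂ, Continuous fun t : ℝ =>
      h ((t:ℂ) * x) + (t:ℂ) * x * deriv h ((t:ℂ) * x) := fun x => by
    have h1 : Continuous fun t : ℝ => (t:ℂ) * x :=
      (Complex.continuous_ofReal).mul continuous_const
    exact (hc.comp h1).add ((h1.mul (hc'.comp h1)))
  have key := intervalIntegral.hasDerivAt_integral_of_dominated_loc_of_deriv_le (𝕜 := ℂ)
    (μ := volume) (a := (0:ℝ)) (b := 1) (s := Metric.ball z₀ 1)
    (F := fun x t => x * h ((t:ℂ) * x))
    (F' := fun x t => h ((t:ℂ) * x) + (t:ℂ) * x * deriv h ((t:ℂ) * x))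
    (x₀ := z₀) (bound := fun _ => M₁ + r * M₂)
    (Metric.ball_mem_nhds z₀ one_pos)
    (Filter.Eventually.of_forall fun x => ((hFcont x).aestronglyMeasurable))
    ((hFcont z₀).intervalIntegrable _ _)
    ((hF'cont z₀).aestronglyMeasurable)
    ?_ (intervalIntegrable_const) ?_
  · -- conclude
    obtain ⟨-, hder⟩ := key
    have hfun : (fun z : ℂ => z * ∫ t in (0:ℝ)..1, h ((t : ℂ) * z))
        = fun x : ℂ => ∫ t in (0:ℝ)..1, x * h ((t:ℂ) * x) := by
      funext x; rw [intervalIntegral.integral_const_mul]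
    rw [hfun]
    refine hder.congr_deriv ?_
    -- ∫ t in 0..1, F' z₀ t = h z₀
    have hG : ∀ t ∈ Set.uIcc (0:ℝ) 1, HasDerivAt (fun s : ℝ => (s:ℂ) * h ((s:ℂ) * z₀))
        (h ((t:ℂ) * z₀) + (t:ℂ) * z₀ * deriv h ((t:ℂ) * z₀)) t := by
      intro t _
      have hE : HasDerivAt (fun w : ℂ => w * h (w * z₀))
          (h ((t:ℂ) * z₀) + (t:ℂ) * z₀ * deriv h ((t:ℂ) * z₀)) ((t:ℂ)) := by
        have hin0 : HasDerivAt (fun w : ℂ => w * z₀) z₀ ((t:ℂ)) := by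
          simpa using (hasDerivAt_id ((t:ℂ))).mul_const z₀
        have hinner : HasDerivAt (fun w : ℂ => h (w * z₀))
            (deriv h ((t:ℂ) * z₀) * z₀) ((t:ℂ)) :=
          (hh ((t:ℂ) * z₀)).hasDerivAt.comp ((t:ℂ)) hin0
        have := (hasDerivAt_id ((t:ℂ))).mul hinner
        exact this.congr_deriv (by rw [id_eq]; ring)
      exact hE.comp_ofReal
    have := intervalIntegral.integral_eq_sub_of_hasDerivAt hG
      ((hF'cont z₀).intervalIntegrable _ _)
    rw [this]
    push_cast
    simp
  · -- bound
    refine Filter.Eventually.of_forall fun t ht x hx => ?_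
    rw [Set.uIoc_of_le (zero_le_one)] at ht
    have htx : ‖(t:ℂ) * x‖ ≤ r := by
      rw [norm_mul, Complex.norm_real]
      have h1 : |t| ≤ 1 := by rw [abs_le]; constructor <;> [linarith [ht.1.le]; exact ht.2]
      have h2 : ‖x‖ ≤ r := by
        have := mem_ball_iff_norm.1 hx
        have : ‖x‖ ≤ ‖z₀‖ + ‖x - z₀‖ := by
          calc ‖x‖ = ‖z₀ + (x - z₀)‖ := by ring_nf
          _ ≤ ‖z₀‖ + ‖x - z₀‖ := norm_add_le _ _
        linarith [mem_ball_iff_norm.1 hx]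
      calc |t| * ‖x‖ ≤ 1 * r := by
            apply mul_le_mul h1 h2 (norm_nonneg _) zero_le_one
      _ = r := one_mul r
    have hmem : (t:ℂ) * x ∈ Metric.closedBall (0:ℂ) r := by
      rwa [Metric.mem_closedBall, dist_zero_right]
    calc ‖h ((t:ℂ) * x) + (t:ℂ) * x * deriv h ((t:ℂ) * x)‖
        ≤ ‖h ((t:ℂ) * x)‖ + ‖(t:ℂ) * x * deriv h ((t:ℂ) * x)‖ := norm_add_le _ _
      _ ≤ M₁ + r * M₂ := by
          gcongr
          · exact hM₁ _ hmem
          · rw [norm_mul]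
            exact mul_le_mul htx (hM₂ _ hmem) (norm_nonneg _) hr0.le
  · -- differentiability in x
    refine Filter.Eventually.of_forall fun t _ x _ => ?_
    have hin0 : HasDerivAt (fun y : ℂ => (t:ℂ) * y) ((t:ℂ)) x := by
      simpa using (hasDerivAt_id x).const_mul ((t:ℂ))
    have hinner : HasDerivAt (fun y : ℂ => h ((t:ℂ) * y))
        (deriv h ((t:ℂ) * x) * (t:ℂ)) x :=
      (hh ((t:ℂ) * x)).hasDerivAt.comp x hin0
    have := (hasDerivAt_id x).mul hinner
    exact this.congr_deriv (by rw [id_eq]; ring)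
lemma cauchy_fock_deriv_est (α : ℝ) {F : ℂ → ℂ} (hF : Differentiable ℂ F) (M : ℝ)
    (hM : ∀ u : ℂ, ‖F u‖ ≤ M * Real.exp ((α/2) * ‖u‖ ^ 2))
    (hα : 0 < α) (z : ℂ) :
    ‖deriv F z‖ ≤
      (1 + ‖z‖) * (M * Real.exp ((α/2) * ‖z‖ ^ 2 + 3 * (α/2))) := by
  have hs : 0 ≤ ‖z‖ := norm_nonneg z
  have h1s : (0:ℝ) < 1 + ‖z‖ := by linarith
  set R : ℝ := 1 / (1 + ‖z‖) with hRdef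
  have hR : 0 < R := by positivity
  have hM0 : 0 ≤ M := by
    have := hM 0
    nlinarith [norm_nonneg (F 0), Real.exp_pos ((α/2) * ‖(0:ℂ)‖ ^ 2)]
  have hsph : ∀ u ∈ Metric.sphere z R, ‖F u‖ ≤
      M * Real.exp ((α/2) * ‖z‖ ^ 2 + 3 * (α/2)) := by
    intro u hu
    have hd : dist u z = R := Metric.mem_sphere.1 hu
    have habs : ‖u‖ ≤ ‖z‖ + R := by
      have : ‖u - z‖ = R := by rwa [← Complex.dist_eq]
      calc ‖u‖ = ‖z + (u - z)‖ := by ring_nf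
        _ ≤ ‖z‖ + ‖u - z‖ := norm_add_le _ _
        _ = ‖z‖ + R := by rw [this]
    have hexp : (α/2) * ‖u‖ ^ 2 ≤ (α/2) * ‖z‖ ^ 2 + 3 * (α/2) := by
      have hRle : R ≤ 1 := by
        rw [hRdef]; rw [div_le_one h1s]; linarith
      have hzR : ‖z‖ * R ≤ 1 := by
        rw [hRdef, mul_one_div, div_le_one h1s]; linarith
      have hu2 : ‖u‖ ^ 2 ≤ ‖z‖ ^ 2 + 3 := by
        nlinarith [norm_nonneg u, hR.le]
      nlinarith
    calc ‖F u‖ ≤ M * Real.exp ((α/2) * ‖u‖ ^ 2) := hM u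
      _ ≤ M * Real.exp ((α/2) * ‖z‖ ^ 2 + 3 * (α/2)) := by
          apply mul_le_mul_of_nonneg_left (Real.exp_le_exp.2 hexp) hM0
  have := Complex.norm_deriv_le_of_forall_mem_sphere_norm_le hR
    (hF.diffContOnCl) hsph
  calc ‖deriv F z‖ ≤
      M * Real.exp ((α/2) * ‖z‖ ^ 2 + 3 * (α/2)) / R := this
    _ = (1 + ‖z‖) * (M * Real.exp ((α/2) * ‖z‖ ^ 2 + 3 * (α/2))) := by
        rw [hRdef]; field_simp

lemma volterra_aux (α : ℝ) (hα : 0 < α) (ψ g : ℂ → ℂ) (hψ : Differentiable ℂ ψ)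
    (hg : Differentiable ℂ g) (z : ℂ) (B : ℝ≥0∞)
    (h : fockNormInf α (volterraComp g ψ (fockKer α (ψ z))) ≤ B) :
    ENNReal.ofReal (‖deriv g z‖ / (1 + ‖z‖) *
        Real.exp ((α / 2) * (‖ψ z‖ ^ 2 - ‖z‖ ^ 2)))
      ≤ ENNReal.ofReal (Real.exp (3 * (α/2))) * B := by
  rcases eq_or_ne B ⊤ with hB | hB
  · rw [hB, ENNReal.mul_top]
    · exact le_top
    · simp only [ne_eq, ENNReal.ofReal_eq_zero, not_le]
      exact Real.exp_pos _
  set M : ℝ := B.toReal with hMdef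
  have hM0 : 0 ≤ M := ENNReal.toReal_nonneg
  set f : ℂ → ℂ := fockKer α (ψ z) with hfdef
  set F : ℂ → ℂ := volterraComp g ψ f with hFdef
  set hfun : ℂ → ℂ := fun u => f (ψ u) * deriv g u with hhdef
  have hhent : Differentiable ℂ hfun :=
    ((fockKer_diff α (ψ z)).comp hψ).mul (differentiable_deriv_of_entire hg)
  have hF_deriv : ∀ u : ℂ, HasDerivAt F (hfun u) u := by
    intro u
    have := hasDerivAt_volterra_primitive hhent u
    exact this
  have hFdiff : Differentiable ℂ F := fun u => (hF_deriv u).differentiableAt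
  have hbound : ∀ u : ℂ, ‖F u‖ ≤ M * Real.exp ((α/2) * ‖u‖ ^ 2) := by
    intro u
    have h1 : ENNReal.ofReal (‖F u‖ * Real.exp (-(α/2) * ‖u‖ ^ 2)) ≤ B :=
      le_trans (le_iSup (fun u : ℂ => ENNReal.ofReal
        (‖F u‖ * Real.exp (-(α/2) * ‖u‖ ^ 2))) u) h
    have h2 : ‖F u‖ * Real.exp (-(α/2) * ‖u‖ ^ 2) ≤ M :=
      (ENNReal.ofReal_le_iff_le_toReal hB).1 h1
    have h3 : Real.exp (-(α/2) * ‖u‖ ^ 2)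
        = (Real.exp ((α/2) * ‖u‖ ^ 2))⁻¹ := by
      rw [← Real.exp_neg]; ring_nf
    rw [h3, ← div_eq_mul_inv, div_le_iff₀ (Real.exp_pos _)] at h2
    linarith [h2]
  have hcauchy := cauchy_fock_deriv_est α hFdiff M hbound hα z
  have hderiv_val : ‖deriv F z‖
      = Real.exp ((α/2) * ‖ψ z‖ ^ 2) * ‖deriv g z‖ := by
    rw [(hF_deriv z).deriv, hhdef]
    simp only [norm_mul]
    rw [hfdef, fockKer_self]
  rw [hderiv_val] at hcauchy
  -- real inequality
  have hs : 0 ≤ ‖z‖ := norm_nonneg z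
  have h1s : (0:ℝ) < 1 + ‖z‖ := by linarith
  have hreal : ‖deriv g z‖ / (1 + ‖z‖) *
      Real.exp ((α / 2) * (‖ψ z‖ ^ 2 - ‖z‖ ^ 2))
      ≤ Real.exp (3 * (α/2)) * M := by
    have e1 : Real.exp ((α/2) * (‖ψ z‖ ^ 2 - ‖z‖ ^ 2))
        = Real.exp ((α/2) * ‖ψ z‖ ^ 2) / Real.exp ((α/2) * ‖z‖ ^ 2) := by
      rw [← Real.exp_sub]; ring_nf
    have e2 : Real.exp ((α/2) * ‖z‖ ^ 2 + 3 * (α/2))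
        = Real.exp ((α/2) * ‖z‖ ^ 2) * Real.exp (3 * (α/2)) := by
      rw [← Real.exp_add]
    rw [e1, div_mul_div_comm, div_le_iff₀ (by positivity)]
    calc ‖deriv g z‖ * Real.exp ((α/2) * ‖ψ z‖ ^ 2)
        = Real.exp ((α/2) * ‖ψ z‖ ^ 2) * ‖deriv g z‖ := by ring
      _ ≤ (1 + ‖z‖) * (M * Real.exp ((α/2) * ‖z‖ ^ 2 + 3 * (α/2))) := hcauchy
      _ = Real.exp (3 * (α/2)) * M * ((1 + ‖z‖) * Real.exp ((α/2) * ‖z‖ ^ 2)) := by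
          rw [e2]; ring
  calc ENNReal.ofReal (‖deriv g z‖ / (1 + ‖z‖) *
        Real.exp ((α / 2) * (‖ψ z‖ ^ 2 - ‖z‖ ^ 2)))
      ≤ ENNReal.ofReal (Real.exp (3 * (α/2)) * M) := ENNReal.ofReal_le_ofReal hreal
    _ = ENNReal.ofReal (Real.exp (3 * (α/2))) * ENNReal.ofReal M :=
        ENNReal.ofReal_mul (Real.exp_nonneg _)
    _ ≤ ENNReal.ofReal (Real.exp (3 * (α/2))) * B := by
        apply mul_le_mul_right
        exact ENNReal.ofReal_toReal_le

/-- if `V_{g,ψ} : F_α^p → F_α^∞` is bounded with operator bound `B`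
(for some `0 < p ≤ ∞`; both the finite-`p` and `p = ∞` cases are recorded), then
`sup_z (|g'(z)|/(1+|z|)) e^{(α/2)(|ψ(z)|²-|z|²)} ≤ C B` with `C = C(α,p)`. -/
theorem volterraComp_sup_le_of_bounded (α p : ℝ) (hα : 0 < α) (hp : 0 < p)
    (ψ g : ℂ → ℂ) (hψ : Differentiable ℂ ψ) (hg : Differentiable ℂ g) :
    ∃ C : ℝ, 0 < C ∧
      (∀ B : ℝ≥0∞,
        (∀ f : ℂ → ℂ, Differentiable ℂ f →
          fockNormInf α (volterraComp g ψ f) ≤ B * fockNormP α p f) →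
        ∀ z : ℂ, ENNReal.ofReal (‖deriv g z‖ / (1 + ‖z‖) *
            Real.exp ((α / 2) * (‖ψ z‖ ^ 2 - ‖z‖ ^ 2)))
          ≤ ENNReal.ofReal C * B) ∧
      (∀ B : ℝ≥0∞,
        (∀ f : ℂ → ℂ, Differentiable ℂ f →
          fockNormInf α (volterraComp g ψ f) ≤ B * fockNormInf α f) →
        ∀ z : ℂ, ENNReal.ofReal (‖deriv g z‖ / (1 + ‖z‖) *
            Real.exp ((α / 2) * (‖ψ z‖ ^ 2 - ‖z‖ ^ 2)))
          ≤ ENNReal.ofReal C * B) := by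
  refine ⟨Real.exp (3 * (α/2)), Real.exp_pos _, ?_, ?_⟩
  · intro B hB z
    apply volterra_aux α hα ψ g hψ hg z B
    have := hB (fockKer α (ψ z)) (fockKer_diff α (ψ z))
    rwa [fockKer_normP α p hα hp, mul_one] at this
  · intro B hB z
    apply volterra_aux α hα ψ g hψ hg z B
    have h1 := hB (fockKer α (ψ z)) (fockKer_diff α (ψ z))
    calc fockNormInf α (volterraComp g ψ (fockKer α (ψ z)))
        ≤ B * fockNormInf α (fockKer α (ψ z)) := h1
      _ ≤ B * 1 := mul_le_mul_right (fockKer_normInf α hα (ψ z)) B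
      _ = B := mul_one B
end
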